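/- arXiv:2605.07309 — 4 statements merged into one kernel-verified Lean document; each statement's English description precedes it below -/
import Mathlib

section
/- Let A be a nonempty finite set, let w, v : A → ℝ be probability weight vectors (nonnegative, summing to 1) with v_a > 0 for all a, let n be a natural number, let μp and νp be probability measures on a measurable space Y, and for each a ∈ A and i ∈ Fin n let μ_{a,i} and ν_i be probability measures on a measurable space X_i. Define the probability measures P = Σ_{a∈A} w_a • (δ_a ⊗ (μp ⊗ ⊗_{i} μ_{a,i})) and Q = Σ_{a∈A} v_a • (δ_a ⊗ (νp ⊗ ⊗_{i} ν_i)) on A × (Y × Π_{i} X_i), where A carries the discrete σ-algebra, δ_a is the Dirac measure at a, and ⊗_{i} denotes the finite product measure. Then klDiv(P, Q) = klDiv(μp, νp) + Σ_{a∈A} w_a log(w_a / v_a) + Σ_{a∈A} w_a Σ_{i} klDiv(μ_{a,i}, ν_i), with the conventions 0·log(0/v)=0 and that both sides equal +∞ when any relevant absolute continuity fails. -/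
open MeasureTheory
open scoped ENNReal Classical

/-- Kullback–Leibler divergence of `μ` from `ν`: `∫ log (dμ/dν) dμ` if `μ ≪ ν` (and the
log-likelihood ratio is integrable), `+∞` otherwise. -/
noncomputable def klDiv {X : Type*} [MeasurableSpace X] (μ ν : Measure X) : ℝ≥0∞ :=
  if μ ≪ ν ∧ Integrable (llr μ ν) μ then ENNReal.ofReal (∫ x, llr μ ν x ∂μ) else ⊤

section Aux
variable {α β : Type*} {mα : MeasurableSpace α} {mβ : MeasurableSpace β}

lemma gibbs_discrete {A : Type*} [Fintype A] (w v : A → ℝ) (hw0 : ∀ a, 0 ≤ w a)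
    (hw1 : ∑ a, w a = 1) (hv0 : ∀ a, 0 < v a) (hv1 : ∑ a, v a = 1) :
    0 ≤ ∑ a, w a * Real.log (w a / v a) := by
  have h : ∀ a : A, w a - v a ≤ w a * Real.log (w a / v a) := by
    intro a
    rcases eq_or_lt_of_le (hw0 a) with h0 | h0
    · rw [← h0]; simp; linarith [(hv0 a).le]
    · have hlog : Real.log (v a / w a) ≤ v a / w a - 1 :=
        Real.log_le_sub_one_of_pos (div_pos (hv0 a) h0)
    
      have hneg : Real.log (w a / v a) = - Real.log (v a / w a) := by
        rw [← Real.log_inv]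
        congr 1
        field_simp
      rw [hneg]
      have h2 := mul_le_mul_of_nonneg_left hlog h0.le
      have hwa : w a * (v a / w a - 1) = v a - w a := by
        field_simp
      nlinarith
  calc (0:ℝ) = ∑ a, (w a - v a) := by rw [Finset.sum_sub_distrib, hw1, hv1]; ring
  _ ≤ _ := Finset.sum_le_sum fun a _ => h a

lemma integral_llr_nonneg' {μ ν : Measure α} [IsProbabilityMeasure μ] [IsProbabilityMeasure ν]
    (hμν : μ ≪ ν) (h_int : Integrable (llr μ ν) μ) : 0 ≤ ∫ x, llr μ ν x ∂μ := by
  have h1 : ∀ᵐ x ∂μ, - llr μ ν x ≤ (ν.rnDeriv μ x).toReal - 1 := by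
    filter_upwards [exp_neg_llr hμν] with x hx
    have h := Real.add_one_le_exp (- llr μ ν x)
    rw [hx] at h
    linarith
  have h2 : Integrable (fun x => (ν.rnDeriv μ x).toReal - 1) μ :=
    Measure.integrable_toReal_rnDeriv.sub (integrable_const 1)
  have h3 : ∫ x, (- llr μ ν x) ∂μ ≤ ∫ x, ((ν.rnDeriv μ x).toReal - 1) ∂μ :=
    integral_mono_ae h_int.neg h2 h1
  rw [integral_neg] at h3
  have h5 : ∫ x, (ν.rnDeriv μ x).toReal ∂μ ≤ 1 := by
    have := Measure.setIntegral_toReal_rnDeriv_le (μ := ν) (ν := μ) (s := Set.univ)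
      (by simp [measure_ne_top])
    rw [setIntegral_univ] at this
    simpa using this
  rw [integral_sub Measure.integrable_toReal_rnDeriv (integrable_const 1)] at h3
  simp only [integral_const, Measure.real, measure_univ, ENNReal.toReal_one, one_smul, smul_eq_mul, mul_one] at h3
  linarith

lemma klDiv_self (μ : Measure α) [SigmaFinite μ] : klDiv μ μ = 0 := by
  have h0 : llr μ μ =ᵐ[μ] 0 := by
    filter_upwards [μ.rnDeriv_self] with x hx
    simp [llr, hx]
  rw [klDiv, if_pos ⟨Measure.AbsolutelyContinuous.rfl, (integrable_congr h0).mpr (integrable_zero _ _ _)⟩]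
  rw [integral_congr_ae h0]
  simp

lemma klDiv_map_equiv {μ ν : Measure α} [SigmaFinite μ] [SigmaFinite ν] (e : α ≃ᵐ β) :
    klDiv (μ.map e) (ν.map e) = klDiv μ ν := by
  have hac : μ.map e ≪ ν.map e ↔ μ ≪ ν := by
    constructor
    · intro h
      have h2 := h.map (f := (e.symm : β → α)) e.symm.measurable
      rwa [MeasurableEquiv.map_symm_map, MeasurableEquiv.map_symm_map] at h2
    · exact fun h => h.map e.measurable
  by_cases hac' : μ ≪ ν
  · have hllr : (fun x => llr (μ.map e) (ν.map e) (e x)) =ᵐ[μ] llr μ ν := by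
      filter_upwards [hac'.ae_le (e.measurableEmbedding.rnDeriv_map μ ν)] with x hx
      simp [llr, hx]
    have hmi : Integrable (llr (μ.map e) (ν.map e)) (μ.map e) ↔ Integrable (llr μ ν) μ := by
      rw [e.measurableEmbedding.integrable_map_iff]
      exact integrable_congr hllr
    by_cases hint : Integrable (llr μ ν) μ
    · rw [klDiv, klDiv, if_pos ⟨hac.mpr hac', hmi.mpr hint⟩, if_pos ⟨hac', hint⟩,
        e.measurableEmbedding.integral_map, integral_congr_ae hllr]
    · rw [klDiv, klDiv, if_neg (fun h => hint (hmi.mp h.2)), if_neg (fun h => hint h.2)]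
  · rw [klDiv, klDiv, if_neg (fun h => hac' (hac.mp h.1)), if_neg (fun h => hac' h.1)]

end Aux

section Prod
variable {α β : Type*} {mα : MeasurableSpace α} {mβ : MeasurableSpace β}
variable {μ₁ ν₁ : Measure α} {μ₂ ν₂ : Measure β}

lemma ae_comp_fst [IsFiniteMeasure μ₂] {P : α → Prop}
    (h : ∀ᵐ x ∂μ₁, P x) : ∀ᵐ p ∂(μ₁.prod μ₂), P p.1 := by
  rw [ae_iff] at h ⊢
  obtain ⟨t, hsub, htm, ht0⟩ := exists_measurable_superset_of_null h
  refine measure_mono_null (fun p hp => ?_) (?_ : μ₁.prod μ₂ (t ×ˢ Set.univ) = 0)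
  · exact Set.mem_prod.2 ⟨hsub hp, Set.mem_univ _⟩
  · rw [Measure.prod_prod, ht0, zero_mul]

lemma ae_comp_snd [SFinite μ₂] {P : β → Prop}
    (h : ∀ᵐ y ∂μ₂, P y) : ∀ᵐ p ∂(μ₁.prod μ₂), P p.2 := by
  rw [ae_iff] at h ⊢
  obtain ⟨t, hsub, htm, ht0⟩ := exists_measurable_superset_of_null h
  refine measure_mono_null (fun p hp => ?_) (?_ : μ₁.prod μ₂ (Set.univ ×ˢ t) = 0)
  · exact Set.mem_prod.2 ⟨Set.mem_univ _, hsub hp⟩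
  · rw [Measure.prod_prod, ht0, mul_zero]

lemma withDensity_prod_rnDeriv [IsFiniteMeasure μ₁] [IsFiniteMeasure μ₂]
    [IsFiniteMeasure ν₁] [IsFiniteMeasure ν₂] (h₁ : μ₁ ≪ ν₁) (h₂ : μ₂ ≪ ν₂) :
    (ν₁.prod ν₂).withDensity (fun p => μ₁.rnDeriv ν₁ p.1 * μ₂.rnDeriv ν₂ p.2) = μ₁.prod μ₂ := by
  refine (Measure.prod_eq (μ := μ₁) (ν := μ₂) fun s t hs ht => ?_).symm
  rw [withDensity_apply _ (hs.prod ht), ← Measure.prod_restrict,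
    lintegral_prod_mul (Measure.measurable_rnDeriv μ₁ ν₁).aemeasurable
      (Measure.measurable_rnDeriv μ₂ ν₂).aemeasurable,
    Measure.setLIntegral_rnDeriv h₁, Measure.setLIntegral_rnDeriv h₂]

lemma rnDeriv_prod' [IsProbabilityMeasure μ₁] [IsProbabilityMeasure μ₂]
    [IsProbabilityMeasure ν₁] [IsProbabilityMeasure ν₂] (h₁ : μ₁ ≪ ν₁) (h₂ : μ₂ ≪ ν₂) :
    (μ₁.prod μ₂).rnDeriv (ν₁.prod ν₂) =ᵐ[ν₁.prod ν₂]
      fun p => μ₁.rnDeriv ν₁ p.1 * μ₂.rnDeriv ν₂ p.2 := by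
  rw [← withDensity_prod_rnDeriv h₁ h₂]
  exact Measure.rnDeriv_withDensity _
    (((Measure.measurable_rnDeriv μ₁ ν₁).comp measurable_fst).mul
      ((Measure.measurable_rnDeriv μ₂ ν₂).comp measurable_snd))

lemma llr_prod' [IsProbabilityMeasure μ₁] [IsProbabilityMeasure μ₂]
    [IsProbabilityMeasure ν₁] [IsProbabilityMeasure ν₂] (h₁ : μ₁ ≪ ν₁) (h₂ : μ₂ ≪ ν₂) :
    llr (μ₁.prod μ₂) (ν₁.prod ν₂) =ᵐ[μ₁.prod μ₂]
      fun p => llr μ₁ ν₁ p.1 + llr μ₂ ν₂ p.2 := by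
  have hac : μ₁.prod μ₂ ≪ ν₁.prod ν₂ := h₁.prod h₂
  filter_upwards [hac.ae_le (rnDeriv_prod' h₁ h₂),
    ae_comp_fst (μ₂ := μ₂) (Measure.rnDeriv_pos h₁),
    ae_comp_fst (μ₂ := μ₂) (h₁.ae_le (Measure.rnDeriv_lt_top μ₁ ν₁)),
    ae_comp_snd (μ₁ := μ₁) (Measure.rnDeriv_pos h₂),
    ae_comp_snd (μ₁ := μ₁) (h₂.ae_le (Measure.rnDeriv_lt_top μ₂ ν₂))]
    with p hp h1p h1t h2p h2t
  rw [llr, hp, ENNReal.toReal_mul, llr, llr, Real.log_mul]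
  · exact ENNReal.toReal_ne_zero.2 ⟨h1p.ne', h1t.ne⟩
  · exact ENNReal.toReal_ne_zero.2 ⟨h2p.ne', h2t.ne⟩

lemma integrable_comp_fst [IsProbabilityMeasure μ₁] [IsProbabilityMeasure μ₂] {f : α → ℝ}
    (hm : Measurable f) : Integrable (fun p : α × β => f p.1) (μ₁.prod μ₂) ↔ Integrable f μ₁ := by
  have h := integrable_map_measure (f := (Prod.fst : α × β → α)) (g := f)
    hm.aestronglyMeasurable measurable_fst.aemeasurable (μ := μ₁.prod μ₂)
  rw [Measure.map_fst_prod, measure_univ, one_smul] at h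
  exact h.symm

lemma integrable_comp_snd [IsProbabilityMeasure μ₁] [IsProbabilityMeasure μ₂] {f : β → ℝ}
    (hm : Measurable f) : Integrable (fun p : α × β => f p.2) (μ₁.prod μ₂) ↔ Integrable f μ₂ := by
  have h := integrable_map_measure (f := (Prod.snd : α × β → β)) (g := f)
    hm.aestronglyMeasurable measurable_snd.aemeasurable (μ := μ₁.prod μ₂)
  rw [Measure.map_snd_prod, measure_univ, one_smul] at h
  exact h.symm

lemma integrable_add_prod_iff [IsProbabilityMeasure μ₁] [IsProbabilityMeasure μ₂]
    {f : α → ℝ} {g : β → ℝ} (hf : Measurable f) (hg : Measurable g) :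
    Integrable (fun p : α × β => f p.1 + g p.2) (μ₁.prod μ₂) ↔
      Integrable f μ₁ ∧ Integrable g μ₂ := by
  constructor
  · intro h
    constructor
    · obtain ⟨y, hy⟩ := h.prod_left_ae.exists
      exact (integrable_add_const_iff (c := g y)).mp hy
    · obtain ⟨x, hx⟩ := h.prod_right_ae.exists
      have hx' : Integrable (fun y => g y + f x) μ₂ := by simpa [add_comm] using hx
      exact integrable_add_const_iff.mp hx'
  · rintro ⟨h1, h2⟩
    exact ((integrable_comp_fst (μ₂ := μ₂) hf).mpr h1).add
      ((integrable_comp_snd (μ₁ := μ₁) hg).mpr h2)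

end Prod

section KLProd
variable {α β : Type*} {mα : MeasurableSpace α} {mβ : MeasurableSpace β}
variable {μ₁ ν₁ : Measure α} {μ₂ ν₂ : Measure β}

lemma prod_ac_iff [IsProbabilityMeasure μ₁] [IsProbabilityMeasure μ₂]
    [IsProbabilityMeasure ν₁] [IsProbabilityMeasure ν₂] :
    μ₁.prod μ₂ ≪ ν₁.prod ν₂ ↔ μ₁ ≪ ν₁ ∧ μ₂ ≪ ν₂ := by
  constructor
  · intro h
    constructor
    · refine Measure.AbsolutelyContinuous.mk fun s hs hs0 => ?_
      have h0 : ν₁.prod ν₂ (s ×ˢ Set.univ) = 0 := by rw [Measure.prod_prod, hs0, zero_mul]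
      have := h h0
      rw [Measure.prod_prod, measure_univ, mul_one] at this
      exact this
    · refine Measure.AbsolutelyContinuous.mk fun s hs hs0 => ?_
      have h0 : ν₁.prod ν₂ (Set.univ ×ˢ s) = 0 := by rw [Measure.prod_prod, hs0, mul_zero]
      have := h h0
      rw [Measure.prod_prod, measure_univ, one_mul] at this
      exact this
  · exact fun ⟨h₁, h₂⟩ => h₁.prod h₂

lemma klDiv_prod [IsProbabilityMeasure μ₁] [IsProbabilityMeasure μ₂]
    [IsProbabilityMeasure ν₁] [IsProbabilityMeasure ν₂] :
    klDiv (μ₁.prod μ₂) (ν₁.prod ν₂) = klDiv μ₁ ν₁ + klDiv μ₂ ν₂ := by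
  by_cases hac : μ₁ ≪ ν₁ ∧ μ₂ ≪ ν₂
  · obtain ⟨h₁, h₂⟩ := hac
    have hllr := llr_prod' h₁ h₂
    have hint : Integrable (llr (μ₁.prod μ₂) (ν₁.prod ν₂)) (μ₁.prod μ₂) ↔
        Integrable (llr μ₁ ν₁) μ₁ ∧ Integrable (llr μ₂ ν₂) μ₂ := by
      rw [integrable_congr hllr]
      exact integrable_add_prod_iff (measurable_llr _ _) (measurable_llr _ _)
    by_cases hi : Integrable (llr μ₁ ν₁) μ₁ ∧ Integrable (llr μ₂ ν₂) μ₂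
    · obtain ⟨hi₁, hi₂⟩ := hi
      rw [klDiv, klDiv, klDiv, if_pos ⟨h₁.prod h₂, hint.mpr ⟨hi₁, hi₂⟩⟩,
        if_pos ⟨h₁, hi₁⟩, if_pos ⟨h₂, hi₂⟩]
      rw [integral_congr_ae hllr]
      have e1 : Integrable (fun p : α × β => llr μ₁ ν₁ p.1) (μ₁.prod μ₂) :=
        (integrable_comp_fst (measurable_llr _ _)).mpr hi₁
      have e2 : Integrable (fun p : α × β => llr μ₂ ν₂ p.2) (μ₁.prod μ₂) :=
        (integrable_comp_snd (measurable_llr _ _)).mpr hi₂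
      rw [integral_add e1 e2]
      have g1 : ∫ p, llr μ₁ ν₁ p.1 ∂(μ₁.prod μ₂) = ∫ x, llr μ₁ ν₁ x ∂μ₁ := by
        have h := integral_map (φ := (Prod.fst : α × β → α)) (μ := μ₁.prod μ₂)
          measurable_fst.aemeasurable (stronglyMeasurable_llr μ₁ ν₁).aestronglyMeasurable
        rw [Measure.map_fst_prod, measure_univ, one_smul] at h
        exact h.symm
      have g2 : ∫ p, llr μ₂ ν₂ p.2 ∂(μ₁.prod μ₂) = ∫ y, llr μ₂ ν₂ y ∂μ₂ := by
        have h := integral_map (φ := (Prod.snd : α × β → β)) (μ := μ₁.prod μ₂)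
          measurable_snd.aemeasurable (stronglyMeasurable_llr μ₂ ν₂).aestronglyMeasurable
        rw [Measure.map_snd_prod, measure_univ, one_smul] at h
        exact h.symm
      rw [g1, g2, ENNReal.ofReal_add (integral_llr_nonneg' h₁ hi₁) (integral_llr_nonneg' h₂ hi₂)]
    · have hbad : ¬ (μ₁.prod μ₂ ≪ ν₁.prod ν₂ ∧
          Integrable (llr (μ₁.prod μ₂) (ν₁.prod ν₂)) (μ₁.prod μ₂)) := fun h => hi (hint.mp h.2)
      rw [klDiv, if_neg hbad]
      rcases not_and_or.mp hi with h | h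
      · rw [klDiv, if_neg (fun hh => h hh.2), klDiv]
        simp
      · have ht : klDiv μ₂ ν₂ = ⊤ := by rw [klDiv, if_neg (fun hh => h hh.2)]
        rw [ht]
        simp
  · have hbad : ¬ μ₁.prod μ₂ ≪ ν₁.prod ν₂ := fun h => hac (prod_ac_iff.mp h)
    rw [klDiv, if_neg (fun h => hbad h.1)]
    rcases not_and_or.mp hac with h | h
    · rw [klDiv, if_neg (fun hh => h hh.1), klDiv]
      simp
    · have ht : klDiv μ₂ ν₂ = ⊤ := by rw [klDiv, if_neg (fun hh => h hh.1)]
      rw [ht]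
      simp

lemma klDiv_pi {n : ℕ} {X : Fin n → Type*} [∀ i, MeasurableSpace (X i)]
    (μ ν : ∀ i, Measure (X i)) [∀ i, IsProbabilityMeasure (μ i)]
    [∀ i, IsProbabilityMeasure (ν i)] :
    klDiv (Measure.pi μ) (Measure.pi ν) = ∑ i, klDiv (μ i) (ν i) := by
  induction n with
  | zero =>
    rw [Measure.pi_of_empty μ, Measure.pi_of_empty ν]
    simp [klDiv_self]
  | succ n ih =>
    rw [← klDiv_map_equiv (MeasurableEquiv.piFinSuccAbove X 0),
      (measurePreserving_piFinSuccAbove μ 0).map_eq,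
      (measurePreserving_piFinSuccAbove ν 0).map_eq,
      klDiv_prod, ih _ _, Fin.sum_univ_succ]
    simp [Fin.zero_succAbove]
    rfl

end KLProd

lemma klDiv_mixture {A Z : Type*} [Fintype A] [MeasurableSpace A] [DiscreteMeasurableSpace A]
    [MeasurableSpace Z] (w v : A → ℝ) (hw0 : ∀ a, 0 ≤ w a) (hw1 : ∑ a, w a = 1)
    (hv0 : ∀ a, 0 < v a) (hv1 : ∑ a, v a = 1)
    (P Q : A → Measure Z) [∀ a, IsProbabilityMeasure (P a)] [∀ a, IsProbabilityMeasure (Q a)] :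
    klDiv (∑ a, ENNReal.ofReal (w a) • ((Measure.dirac a).prod (P a)))
          (∑ a, ENNReal.ofReal (v a) • ((Measure.dirac a).prod (Q a)))
    = ENNReal.ofReal (∑ a, w a * Real.log (w a / v a))
      + ∑ a, ENNReal.ofReal (w a) * klDiv (P a) (Q a) := by
  simp_rw [Measure.dirac_prod]
  set PP : Measure (A × Z) := ∑ a, ENNReal.ofReal (w a) • (P a).map (Prod.mk a) with hPP
  set QQ : Measure (A × Z) := ∑ a, ENNReal.ofReal (v a) • (Q a).map (Prod.mk a) with hQQ
  set F : A × Z → ℝ≥0∞ :=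
    fun p => (ENNReal.ofReal (w p.1) / ENNReal.ofReal (v p.1)) * (P p.1).rnDeriv (Q p.1) p.2
    with hF
  -- preimage of a labelled rectangle
  have hpre : ∀ (b a : A) (s : Set Z), Prod.mk b ⁻¹' ({a} ×ˢ s) = if b = a then s else ∅ := by
    intro b a s
    by_cases h : b = a
    · subst h; ext z; simp
    · ext z; simp [h, eq_comm]
  -- applying PP/QQ-shaped measures to measurable sets
  have happly : ∀ (c : A → ℝ≥0∞) (M : A → Measure Z), (∀ a, IsProbabilityMeasure (M a)) →
      ∀ (s : Set (A × Z)), MeasurableSet s →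
      (∑ a, c a • (M a).map (Prod.mk a)) s = ∑ a, c a * M a (Prod.mk a ⁻¹' s) := by
    intro c M hM s hs
    rw [Measure.finset_sum_apply]
    refine Finset.sum_congr rfl fun a _ => ?_
    rw [Measure.smul_apply, Measure.map_apply measurable_prodMk_left hs, smul_eq_mul]
  -- probability instances
  haveI hQQp : IsProbabilityMeasure QQ := by
    constructor
    rw [hQQ, happly _ _ (fun a => inferInstance) _ MeasurableSet.univ]
    simp only [Set.preimage_univ, measure_univ, mul_one]
    rw [← ENNReal.ofReal_sum_of_nonneg (fun a _ => (hv0 a).le), hv1, ENNReal.ofReal_one]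
  haveI hPPp : IsProbabilityMeasure PP := by
    constructor
    rw [hPP, happly _ _ (fun a => inferInstance) _ MeasurableSet.univ]
    simp only [Set.preimage_univ, measure_univ, mul_one]
    rw [← ENNReal.ofReal_sum_of_nonneg (fun a _ => hw0 a), hw1, ENNReal.ofReal_one]
  have hFmeas : Measurable F := by
    have h1 : Measurable fun q : Z × A => F (q.2, q.1) :=
      measurable_from_prod_countable_left fun a => by
        have hm : Measurable fun z : Z =>
            (ENNReal.ofReal (w a) / ENNReal.ofReal (v a)) * (P a).rnDeriv (Q a) z :=
          (Measure.measurable_rnDeriv (P a) (Q a)).const_mul _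
        exact hm
    exact h1.comp measurable_swap
  -- the withDensity representation, assuming componentwise absolute continuity
  have key : ∀ (_h : ∀ a, w a ≠ 0 → P a ≪ Q a), QQ.withDensity F = PP := by
    intro h
    ext s hs
    rw [withDensity_apply _ hs, ← lintegral_indicator hs, hQQ, lintegral_finset_sum_measure,
      hPP, happly _ _ (fun a => inferInstance) _ hs]
    refine Finset.sum_congr rfl fun a _ => ?_
    rw [lintegral_smul_measure,
      lintegral_map (hFmeas.indicator hs) measurable_prodMk_left]
    have hind : (fun z => s.indicator F (a, z))
        = (Prod.mk a ⁻¹' s).indicator (fun z => F (a, z)) := by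
      ext z
      by_cases hz : (a, z) ∈ s <;> simp [Set.indicator, hz, Set.mem_preimage]
    rw [hind, lintegral_indicator (measurable_prodMk_left hs)]
    by_cases ha : w a = 0
    · simp [hF, ha]
    · have hrw : (fun z => F (a, z))
          = fun z => (ENNReal.ofReal (w a) / ENNReal.ofReal (v a)) * (P a).rnDeriv (Q a) z := by
        rw [hF]
      rw [hrw, lintegral_const_mul _ (Measure.measurable_rnDeriv _ _),
        Measure.setLIntegral_rnDeriv (h a ha)]
      have hne0 : ENNReal.ofReal (v a) ≠ 0 := by
        simp [ENNReal.ofReal_eq_zero, not_le, hv0 a]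
      have hc : ENNReal.ofReal (v a) * (ENNReal.ofReal (w a) / ENNReal.ofReal (v a))
          = ENNReal.ofReal (w a) := by
        rw [div_eq_mul_inv, mul_comm (ENNReal.ofReal (w a)), ← mul_assoc,
          ENNReal.mul_inv_cancel hne0 ENNReal.ofReal_ne_top, one_mul]
      rw [smul_eq_mul, ← mul_assoc, hc]
  -- absolute continuity: forward direction
  have hACfwd : PP ≪ QQ → ∀ a, w a ≠ 0 → P a ≪ Q a := by
    intro hACpq a ha
    refine Measure.AbsolutelyContinuous.mk fun s hs hs0 => ?_
    have hQ0 : QQ ({a} ×ˢ s) = 0 := by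
      rw [hQQ, happly _ _ (fun a => inferInstance) _ ((measurableSet_singleton a).prod hs)]
      refine Finset.sum_eq_zero fun b _ => ?_
      rw [hpre]
      by_cases hba : b = a
      · simp [hba, hs0]
      · simp [hba]
    have hP0 := hACpq hQ0
    rw [hPP, happly _ _ (fun a => inferInstance) _ ((measurableSet_singleton a).prod hs)] at hP0
    have ha0 := Finset.sum_eq_zero_iff.mp hP0 a (Finset.mem_univ a)
    rw [hpre] at ha0
    simp only [if_pos rfl, mul_eq_zero, ENNReal.ofReal_eq_zero] at ha0
    rcases ha0 with h0 | h0
    · exact absurd (le_antisymm h0 (hw0 a)) ha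
    · exact h0
  -- a.e. transfer to PP
  have hae : ∀ {G : A × Z → Prop}, (∀ a, w a ≠ 0 → ∀ᵐ z ∂(P a), G (a, z)) → ∀ᵐ p ∂PP, G p := by
    intro G hG
    rw [ae_iff, hPP, Measure.finset_sum_apply]
    refine Finset.sum_eq_zero fun a _ => ?_
    rw [Measure.smul_apply, smul_eq_mul]
    by_cases ha : w a = 0
    · simp [ha]
    · have h1 : ∀ᵐ p ∂((P a).map (Prod.mk a)), G p :=
        (measurableEmbedding_prodMk_left a).ae_map_iff.mpr (hG a ha)
      rw [ae_iff] at h1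
      rw [h1, mul_zero]
  by_cases hACpq : PP ≪ QQ
  · have h : ∀ a, w a ≠ 0 → P a ≪ Q a := hACfwd hACpq
    have hwd := key h
    have hrn : PP.rnDeriv QQ =ᵐ[QQ] F := by
      rw [← hwd]
      exact Measure.rnDeriv_withDensity QQ hFmeas
    have hllr : llr PP QQ =ᵐ[PP]
        fun p => Real.log (w p.1 / v p.1) + llr (P p.1) (Q p.1) p.2 := by
      have h1 : ∀ᵐ p ∂PP, PP.rnDeriv QQ p = F p := hACpq.ae_le hrn
      have h2 : ∀ᵐ p ∂PP, 0 < (P p.1).rnDeriv (Q p.1) p.2 :=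
        hae fun a ha => Measure.rnDeriv_pos (h a ha)
      have h3 : ∀ᵐ p ∂PP, (P p.1).rnDeriv (Q p.1) p.2 < ⊤ :=
        hae fun a ha => (h a ha).ae_le (Measure.rnDeriv_lt_top (P a) (Q a))
      have h4 : ∀ᵐ p ∂PP, w p.1 ≠ 0 :=
        hae fun a ha => Filter.Eventually.of_forall fun _ => ha
      filter_upwards [h1, h2, h3, h4] with p hp1 hp2 hp3 hp4
      have hdiv : ((ENNReal.ofReal (w p.1) / ENNReal.ofReal (v p.1)) : ℝ≥0∞).toReal
          = w p.1 / v p.1 := by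
        rw [ENNReal.toReal_div, ENNReal.toReal_ofReal (hw0 _), ENNReal.toReal_ofReal (hv0 _).le]
      rw [llr, hp1, hF]
      simp only []
      rw [ENNReal.toReal_mul, hdiv, Real.log_mul (div_ne_zero hp4 (hv0 _).ne')
        (ENNReal.toReal_ne_zero.2 ⟨hp2.ne', hp3.ne⟩)]
      rfl
    have hInt : Integrable (llr PP QQ) PP ↔
        ∀ a, w a ≠ 0 → Integrable (llr (P a) (Q a)) (P a) := by
      rw [integrable_congr hllr, hPP, integrable_finset_sum_measure]
      constructor
      · intro hall a ha
        have h1 := hall a (Finset.mem_univ a)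
        have hne0 : ENNReal.ofReal (w a) ≠ 0 := by
          simp [ENNReal.ofReal_eq_zero, not_le, lt_of_le_of_ne (hw0 a) (Ne.symm ha)]
        rw [integrable_smul_measure hne0 ENNReal.ofReal_ne_top,
          (measurableEmbedding_prodMk_left a).integrable_map_iff] at h1
        have h2 : Integrable (fun z => Real.log (w a / v a) + llr (P a) (Q a) z) (P a) := h1
        exact integrable_const_add_iff.mp h2
      · intro hall a _
        by_cases ha : w a = 0
        · simp [ha]
        · have hne0 : ENNReal.ofReal (w a) ≠ 0 := by
            simp [ENNReal.ofReal_eq_zero, not_le, lt_of_le_of_ne (hw0 a) (Ne.symm ha)]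
          rw [integrable_smul_measure hne0 ENNReal.ofReal_ne_top,
            (measurableEmbedding_prodMk_left a).integrable_map_iff]
          have h5 : Integrable (fun z => Real.log (w a / v a) + llr (P a) (Q a) z) (P a) :=
            (integrable_const _).add (hall a ha)
          exact h5
    by_cases hint : ∀ a, w a ≠ 0 → Integrable (llr (P a) (Q a)) (P a)
    · -- the finite case
      rw [klDiv, if_pos ⟨hACpq, hInt.mpr hint⟩]
      have hIg : ∀ a ∈ (Finset.univ : Finset A), Integrable
          (fun p : A × Z => Real.log (w p.1 / v p.1) + llr (P p.1) (Q p.1) p.2)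
          (ENNReal.ofReal (w a) • (P a).map (Prod.mk a)) := by
        have := (integrable_congr hllr).mp (hInt.mpr hint)
        rw [hPP, integrable_finset_sum_measure] at this
        exact this
      have hIcomp : ∫ p, llr PP QQ p ∂PP
          = ∑ a, w a * (Real.log (w a / v a) + ∫ z, llr (P a) (Q a) z ∂(P a)) := by
        rw [integral_congr_ae hllr, hPP, integral_finset_sum_measure hIg]
        refine Finset.sum_congr rfl fun a _ => ?_
        rw [integral_smul_measure]
        by_cases ha : w a = 0
        · simp [ha]
        · rw [(measurableEmbedding_prodMk_left a).integral_map,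
            ENNReal.toReal_ofReal (hw0 a), smul_eq_mul]
          congr 1
          have hval : ∫ z, (Real.log (w a / v a) + llr (P a) (Q a) z) ∂(P a)
              = Real.log (w a / v a) + ∫ z, llr (P a) (Q a) z ∂(P a) := by
            rw [integral_add (integrable_const _) (hint a ha), integral_const]
            simp
          exact hval
      rw [hIcomp]
      have hsplit : ∑ a, w a * (Real.log (w a / v a) + ∫ z, llr (P a) (Q a) z ∂(P a))
          = (∑ a, w a * Real.log (w a / v a))
            + ∑ a, w a * ∫ z, llr (P a) (Q a) z ∂(P a) := by
        rw [← Finset.sum_add_distrib]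
        refine Finset.sum_congr rfl fun a _ => by ring
      have hYnn : ∀ a ∈ (Finset.univ : Finset A),
          0 ≤ w a * ∫ z, llr (P a) (Q a) z ∂(P a) := by
        intro a _
        by_cases ha : w a = 0
        · simp [ha]
        · exact mul_nonneg (hw0 a) (integral_llr_nonneg' (h a ha) (hint a ha))
      rw [hsplit, ENNReal.ofReal_add (gibbs_discrete w v hw0 hw1 hv0 hv1)
        (Finset.sum_nonneg hYnn), ENNReal.ofReal_sum_of_nonneg hYnn]
      congr 1
      refine Finset.sum_congr rfl fun a _ => ?_
      by_cases ha : w a = 0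
      · simp [ha]
      · rw [ENNReal.ofReal_mul (hw0 a), klDiv, if_pos ⟨h a ha, hint a ha⟩]
    · -- integrability failure
      rw [klDiv, if_neg (fun hh => hint (hInt.mp hh.2))]
      push_neg at hint
      obtain ⟨a, ha, hni⟩ := hint
      have hne0 : ENNReal.ofReal (w a) ≠ 0 := by
        simp [ENNReal.ofReal_eq_zero, not_le, lt_of_le_of_ne (hw0 a) (Ne.symm ha)]
      have htop : ENNReal.ofReal (w a) * klDiv (P a) (Q a) = ⊤ := by
        rw [klDiv, if_neg (fun hh => hni hh.2), ENNReal.mul_top hne0]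
      have hsum : (∑ a, ENNReal.ofReal (w a) * klDiv (P a) (Q a)) = ⊤ :=
        ENNReal.sum_eq_top.mpr ⟨a, Finset.mem_univ a, htop⟩
      rw [hsum, add_top]
  · -- absolute continuity failure
    rw [klDiv, if_neg (fun hh => hACpq hh.1)]
    have hex : ∃ a, w a ≠ 0 ∧ ¬ P a ≪ Q a := by
      by_contra hno
      push_neg at hno
      exact hACpq ((key hno) ▸ withDensity_absolutelyContinuous QQ F)
    obtain ⟨a, ha, hnac⟩ := hex
    have hne0 : ENNReal.ofReal (w a) ≠ 0 := by
      simp [ENNReal.ofReal_eq_zero, not_le, lt_of_le_of_ne (hw0 a) (Ne.symm ha)]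
    have htop : ENNReal.ofReal (w a) * klDiv (P a) (Q a) = ⊤ := by
      rw [klDiv, if_neg (fun hh => hnac hh.1), ENNReal.mul_top hne0]
    have hsum : (∑ a, ENNReal.ofReal (w a) * klDiv (P a) (Q a)) = ⊤ :=
      ENNReal.sum_eq_top.mpr ⟨a, Finset.mem_univ a, htop⟩
    rw [hsum, add_top]

/-- KLD simplification (Lemma 1): the KL divergence between a mixture of labelled products
`P = Σ_a w_a • (δ_a ⊗ (μp ⊗ ⊗_i μ_{a,i}))` and a PMB-form measure
`Q = Σ_a v_a • (δ_a ⊗ (νp ⊗ ⊗_i ν_i))` decomposes as the KLD between the PPP parts, the KLD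
between the weight vectors, and the weighted sum of the KLDs between the Bernoulli parts. -/
theorem klDiv_mixture_of_products {A Y : Type*} [Fintype A] [Nonempty A]
    [MeasurableSpace A] [DiscreteMeasurableSpace A] [MeasurableSpace Y]
    {n : ℕ} {X : Fin n → Type*} [∀ i, MeasurableSpace (X i)]
    (w v : A → ℝ) (hw0 : ∀ a, 0 ≤ w a) (hw1 : ∑ a, w a = 1)
    (hv0 : ∀ a, 0 < v a) (hv1 : ∑ a, v a = 1)
    (μp νp : Measure Y) [IsProbabilityMeasure μp] [IsProbabilityMeasure νp]
    (μ : A → ∀ i, Measure (X i)) (ν : ∀ i, Measure (X i))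
    [∀ a i, IsProbabilityMeasure (μ a i)] [∀ i, IsProbabilityMeasure (ν i)] :
    klDiv
      (∑ a, ENNReal.ofReal (w a) •
        ((Measure.dirac a).prod (μp.prod (Measure.pi (μ a)))))
      (∑ a, ENNReal.ofReal (v a) •
        ((Measure.dirac a).prod (νp.prod (Measure.pi ν))))
    = klDiv μp νp + ENNReal.ofReal (∑ a, w a * Real.log (w a / v a))
      + ∑ a, ENNReal.ofReal (w a) * ∑ i, klDiv (μ a i) (ν i) := by
  rw [klDiv_mixture w v hw0 hw1 hv0 hv1 (fun a => μp.prod (Measure.pi (μ a)))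
    (fun _ => νp.prod (Measure.pi ν))]
  have hterm : ∀ a, klDiv (μp.prod (Measure.pi (μ a))) (νp.prod (Measure.pi ν))
      = klDiv μp νp + ∑ i, klDiv (μ a i) (ν i) := by
    intro a
    rw [klDiv_prod, klDiv_pi]
  simp_rw [hterm]
  have hsum1 : (∑ a : A, ENNReal.ofReal (w a)) = 1 := by
    rw [← ENNReal.ofReal_sum_of_nonneg (fun a _ => hw0 a), hw1, ENNReal.ofReal_one]
  have hdist : ∑ a : A, ENNReal.ofReal (w a) * (klDiv μp νp + ∑ i, klDiv (μ a i) (ν i))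
      = klDiv μp νp + ∑ a : A, ENNReal.ofReal (w a) * ∑ i, klDiv (μ a i) (ν i) := by
    simp_rw [mul_add]
    rw [Finset.sum_add_distrib, ← Finset.sum_mul, hsum1, one_mul]
  rw [hdist]
  ring
end

section
/- Let A be a nonempty finite set, let w : A → ℝ be a probability weight vector, let μ_a (a ∈ A) be probability measures on a measurable space X, and let μ̄ = Σ_{a∈A} w_a • μ_a. Then for every probability measure ν on X with μ_a ≪ ν for all a with w_a > 0, the compensation identity holds: Σ_{a∈A} w_a · klDiv(μ_a, ν) = Σ_{a∈A} w_a · klDiv(μ_a, μ̄) + klDiv(μ̄, ν). -/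
open MeasureTheory
open scoped ENNReal Classical

private lemma aux_mul_neg_log_le_one {r : ℝ} (hr : 0 ≤ r) : r * max (-Real.log r) 0 ≤ 1 := by
  rcases eq_or_lt_of_le hr with h | h
  · simp [← h]
  rcases le_or_gt 1 r with h1 | h1
  · rw [max_eq_right (by simpa using Real.log_nonneg h1)]
    simp
  · have hlog : Real.log r⁻¹ ≤ r⁻¹ - 1 := Real.log_le_sub_one_of_pos (by positivity)
    rw [Real.log_inv] at hlog
    rcases le_or_gt (-Real.log r) 0 with h2 | h2
    · rw [max_eq_right h2]; nlinarith
    · rw [max_eq_left h2.le]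
      calc r * -Real.log r ≤ r * (r⁻¹ - 1) := by
            exact mul_le_mul_of_nonneg_left hlog hr
        _ = 1 - r := by field_simp
        _ ≤ 1 := by linarith

private lemma abs_le_max_add {t C : ℝ} (h : t ≤ C) : |t| ≤ max C 0 + max (-t) 0 := by
  rcases abs_cases t with ⟨h1, h2⟩ | ⟨h1, h2⟩
  · rw [h1]
    have : t ≤ max C 0 := le_trans h (le_max_left _ _)
    have : (0:ℝ) ≤ max (-t) 0 := le_max_right _ _
    linarith
  · rw [h1]
    have : -t ≤ max (-t) 0 := le_max_left _ _
    have : (0:ℝ) ≤ max C 0 := le_max_right _ _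
    linarith

private lemma integrable_neg_part_llr {X : Type*} [MeasurableSpace X] (μ ρ : Measure X)
    [IsProbabilityMeasure μ] [IsProbabilityMeasure ρ] (h : μ ≪ ρ) :
    Integrable (fun x => max (-(llr μ ρ x)) 0) μ := by
  refine ⟨((measurable_llr μ ρ).neg.max measurable_const).stronglyMeasurable.aestronglyMeasurable,
    ?_⟩
  refine (hasFiniteIntegral_iff_ofReal
    (Filter.Eventually.of_forall fun x => le_max_right _ _)).mpr ?_
  have hmeas : Measurable fun x => ENNReal.ofReal (max (-(llr μ ρ x)) 0) :=
    ((measurable_llr μ ρ).neg.max measurable_const).ennreal_ofReal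
  calc ∫⁻ x, ENNReal.ofReal (max (-(llr μ ρ x)) 0) ∂μ
      = ∫⁻ x, μ.rnDeriv ρ x * ENNReal.ofReal (max (-(llr μ ρ x)) 0) ∂ρ := by
        have key : ∀ g : X → ℝ≥0∞, Measurable g →
            ∫⁻ x, g x ∂μ = ∫⁻ x, μ.rnDeriv ρ x * g x ∂ρ := by
          intro g hg
          conv_lhs => rw [← Measure.withDensity_rnDeriv_eq μ ρ h]
          rw [lintegral_withDensity_eq_lintegral_mul ρ (Measure.measurable_rnDeriv μ ρ) hg]
          rfl
        exact key _ hmeas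
    _ ≤ ∫⁻ _, 1 ∂ρ := by
        refine lintegral_mono_ae ?_
        filter_upwards [Measure.rnDeriv_lt_top μ ρ] with x hx
        have hd : μ.rnDeriv ρ x = ENNReal.ofReal ((μ.rnDeriv ρ x).toReal) :=
          (ENNReal.ofReal_toReal hx.ne).symm
        rw [hd, llr, ← ENNReal.ofReal_mul ENNReal.toReal_nonneg]
        calc ENNReal.ofReal ((μ.rnDeriv ρ x).toReal *
              max (-Real.log (μ.rnDeriv ρ x).toReal) 0)
            ≤ ENNReal.ofReal 1 :=
              ENNReal.ofReal_le_ofReal (aux_mul_neg_log_le_one ENNReal.toReal_nonneg)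
          _ = 1 := ENNReal.ofReal_one
    _ < ⊤ := by simp

private lemma integral_llr_nonneg'_s4 {X : Type*} [MeasurableSpace X] (μ ρ : Measure X)
    [IsProbabilityMeasure μ] [IsProbabilityMeasure ρ] (h : μ ≪ ρ)
    (hint : Integrable (llr μ ρ) μ) : 0 ≤ ∫ x, llr μ ρ x ∂μ := by
  have hexp : (fun x => Real.exp (-(llr μ ρ x))) =ᵐ[μ] fun x => (ρ.rnDeriv μ x).toReal :=
    exp_neg_llr h
  have hint_exp : Integrable (fun x => Real.exp (-(llr μ ρ x))) μ :=
    (integrable_congr hexp).mpr Measure.integrable_toReal_rnDeriv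
  have hjensen : Real.exp (∫ x, -(llr μ ρ x) ∂μ) ≤ ∫ x, Real.exp (-(llr μ ρ x)) ∂μ :=
    convexOn_exp.map_integral_le Real.continuous_exp.continuousOn isClosed_univ
      (Filter.Eventually.of_forall fun x => Set.mem_univ _) hint.neg hint_exp
  have hle : ∫ x, Real.exp (-(llr μ ρ x)) ∂μ ≤ 1 := by
    rw [integral_congr_ae hexp]
    calc ∫ x, (ρ.rnDeriv μ x).toReal ∂μ
        = ∫ x in Set.univ, (ρ.rnDeriv μ x).toReal ∂μ := (setIntegral_univ).symm
      _ ≤ (ρ Set.univ).toReal := Measure.setIntegral_toReal_rnDeriv_le (measure_ne_top ρ _)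
      _ = 1 := by simp
  have : Real.exp (∫ x, -(llr μ ρ x) ∂μ) ≤ 1 := le_trans hjensen hle
  rw [Real.exp_le_one_iff, integral_neg, neg_nonpos] at this
  exact this

private lemma llr_chain {X : Type*} [MeasurableSpace X] (μ m ν : Measure X)
    [IsProbabilityMeasure μ] [IsProbabilityMeasure m] [IsProbabilityMeasure ν]
    (hμm : μ ≪ m) (hmν : m ≪ ν) :
    llr μ ν =ᵐ[μ] fun x => llr μ m x + llr m ν x := by
  have hμν : μ ≪ ν := hμm.trans hmν
  filter_upwards [hμν.ae_le (Measure.rnDeriv_mul_rnDeriv hμm),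
    Measure.rnDeriv_pos hμm, hμm.ae_le (Measure.rnDeriv_lt_top μ m),
    hμm.ae_le (Measure.rnDeriv_pos hmν), hμν.ae_le (Measure.rnDeriv_lt_top m ν)]
    with x h1 h2 h3 h4 h5
  rw [llr, llr, llr, ← h1, Pi.mul_apply, ENNReal.toReal_mul, Real.log_mul]
  · exact (ENNReal.toReal_pos h2.ne' h3.ne).ne'
  · exact (ENNReal.toReal_pos h4.ne' h5.ne).ne'

private lemma llr_le_const {X : Type*} [MeasurableSpace X] (μ m : Measure X)
    [IsProbabilityMeasure μ] [IsProbabilityMeasure m] {c : ℝ≥0∞} (hc0 : c ≠ 0) (hc : c ≠ ∞)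
    (hle : c • μ ≤ m) (hμm : μ ≪ m) :
    ∀ᵐ x ∂μ, llr μ m x ≤ Real.log (c⁻¹.toReal) := by
  have h1 : (c • μ).rnDeriv m ≤ᵐ[m] 1 := Measure.rnDeriv_le_one_of_le hle
  have h2 : (c • μ).rnDeriv m =ᵐ[m] c • μ.rnDeriv m :=
    Measure.rnDeriv_smul_left_of_ne_top μ m hc
  filter_upwards [hμm.ae_le h1, hμm.ae_le h2, Measure.rnDeriv_pos hμm,
    hμm.ae_le (Measure.rnDeriv_lt_top μ m)] with x hx1 hx2 hx3 hx4
  have hbound : μ.rnDeriv m x ≤ c⁻¹ := by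
    rw [hx2] at hx1
    simp only [Pi.smul_apply, smul_eq_mul, Pi.one_apply] at hx1
    rwa [ENNReal.le_inv_iff_mul_le, mul_comm]
  have htoReal : (μ.rnDeriv m x).toReal ≤ c⁻¹.toReal :=
    ENNReal.toReal_mono (by simp [ENNReal.inv_ne_top, hc0]) hbound
  exact Real.log_le_log (ENNReal.toReal_pos hx3.ne' hx4.ne) htoReal
/-- Compensation identity: for the mixture `μ̄ = Σ_a w_a • μ_a` and any probability measure `ν`
with `μ_a ≪ ν` whenever `w_a > 0`, the weighted average divergence to `ν` equals the weighted
average divergence to the mixture plus the divergence of the mixture from `ν`. -/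
theorem compensation_identity {A X : Type*} [Fintype A] [Nonempty A] [MeasurableSpace X]
    (w : A → ℝ) (hw0 : ∀ a, 0 ≤ w a) (hw1 : ∑ a, w a = 1)
    (μ : A → Measure X) [∀ a, IsProbabilityMeasure (μ a)]
    (ν : Measure X) [IsProbabilityMeasure ν] (hac : ∀ a, 0 < w a → μ a ≪ ν) :
    ∑ a, ENNReal.ofReal (w a) * klDiv (μ a) ν
      = (∑ a, ENNReal.ofReal (w a) * klDiv (μ a) (∑ a', ENNReal.ofReal (w a') • μ a'))
        + klDiv (∑ a', ENNReal.ofReal (w a') • μ a') ν := by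
  set m : Measure X := ∑ a', ENNReal.ofReal (w a') • μ a' with hm
  have hwzero : ∀ a, ¬ 0 < w a → w a = 0 := fun a ha => le_antisymm (not_lt.mp ha) (hw0 a)
  -- m is a probability measure
  have hprob : IsProbabilityMeasure m := by
    constructor
    rw [hm, Measure.finset_sum_apply]
    simp only [Measure.smul_apply, smul_eq_mul, measure_univ, mul_one]
    rw [← ENNReal.ofReal_sum_of_nonneg (fun a _ => hw0 a), hw1, ENNReal.ofReal_one]
  haveI := hprob
  -- absolute continuity facts
  have hμm : ∀ a, 0 < w a → μ a ≪ m := by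
    intro a ha s hs
    rw [hm, Measure.finset_sum_apply] at hs
    have := Finset.sum_eq_zero_iff.mp hs a (Finset.mem_univ a)
    simp only [Measure.smul_apply, smul_eq_mul] at this
    rcases mul_eq_zero.mp this with h | h
    · exact absurd h (by simp [ENNReal.ofReal_eq_zero, not_le, ha])
    · exact h
  have hmν : m ≪ ν := by
    intro s hs
    rw [hm, Measure.finset_sum_apply]
    refine Finset.sum_eq_zero fun a _ => ?_
    simp only [Measure.smul_apply, smul_eq_mul]
    rcases lt_or_ge 0 (w a) with ha | ha
    · rw [hac a ha hs, mul_zero]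
    · rw [ENNReal.ofReal_eq_zero.mpr ha, zero_mul]
  have hsmul_le : ∀ a, ENNReal.ofReal (w a) • μ a ≤ m := by
    intro a
    rw [hm, Measure.le_iff]
    intro s hs
    rw [Measure.finset_sum_apply]
    exact Finset.single_le_sum (f := fun a' => (ENNReal.ofReal (w a') • μ a') s)
      (fun i _ => zero_le) (Finset.mem_univ a)
  -- integrability transfer between m and the components
  have hint_iff : ∀ f : X → ℝ, Integrable f m ↔ ∀ a, 0 < w a → Integrable f (μ a) := by
    intro f
    rw [hm, integrable_finset_sum_measure]
    constructor
    · intro h a ha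
      exact (integrable_smul_measure (by simp [ENNReal.ofReal_eq_zero, not_le, ha])
        ENNReal.ofReal_ne_top).mp (h a (Finset.mem_univ a))
    · intro h a _
      rcases lt_or_ge 0 (w a) with ha | ha
      · exact (h a ha).smul_measure ENNReal.ofReal_ne_top
      · rw [ENNReal.ofReal_eq_zero.mpr ha, zero_smul]
        exact integrable_zero_measure
  have hint_eq : ∀ f : X → ℝ, Integrable f m →
      ∫ x, f x ∂m = ∑ a, w a * ∫ x, f x ∂(μ a) := by
    intro f hf
    rw [hm] at hf ⊢
    rw [integral_finset_sum_measure (integrable_finset_sum_measure.mp hf)]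
    refine Finset.sum_congr rfl fun a _ => ?_
    rw [integral_smul_measure, ENNReal.toReal_ofReal (hw0 a), smul_eq_mul]
  by_cases hcase : ∀ a, 0 < w a → Integrable (llr (μ a) ν) (μ a)
  · -- main case: everything finite
    -- integrability of llr (μ a) m
    have hga : ∀ a, 0 < w a → Integrable (llr (μ a) m) (μ a) := by
      intro a ha
      have hbd := llr_le_const (μ a) m
        (c := ENNReal.ofReal (w a)) (by simp [ENNReal.ofReal_eq_zero, not_le, ha])
        ENNReal.ofReal_ne_top (hsmul_le a) (hμm a ha)
      set C : ℝ := Real.log (((ENNReal.ofReal (w a))⁻¹).toReal)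
      have hnegint := integrable_neg_part_llr (μ a) m (hμm a ha)
      have hdom : Integrable (fun x => max C 0 + max (-(llr (μ a) m x)) 0) (μ a) :=
        (integrable_const _).add hnegint
      refine hdom.mono' (stronglyMeasurable_llr _ _).aestronglyMeasurable ?_
      filter_upwards [hbd] with x hx
      rw [Real.norm_eq_abs]
      exact abs_le_max_add hx
    -- chain rule a.e.
    have hchain : ∀ a, 0 < w a →
        llr (μ a) ν =ᵐ[μ a] fun x => llr (μ a) m x + llr m ν x :=
      fun a ha => llr_chain (μ a) m ν (hμm a ha) hmν
    -- integrability of llr m ν w.r.t. each μ a and w.r.t. m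
    have hha : ∀ a, 0 < w a → Integrable (llr m ν) (μ a) := by
      intro a ha
      have : Integrable (fun x => llr (μ a) ν x - llr (μ a) m x) (μ a) :=
        (hcase a ha).sub (hga a ha)
      refine this.congr ?_
      filter_upwards [hchain a ha] with x hx
      rw [hx]; ring
    have hHm_int : Integrable (llr m ν) m := (hint_iff _).mpr hha
    -- real-valued quantities
    set I : A → ℝ := fun a => ∫ x, llr (μ a) ν x ∂(μ a) with hI
    set G : A → ℝ := fun a => ∫ x, llr (μ a) m x ∂(μ a) with hG
    set Hf : A → ℝ := fun a => ∫ x, llr m ν x ∂(μ a) with hHf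
    set Hm : ℝ := ∫ x, llr m ν x ∂m with hHm
    have hIdecomp : ∀ a, 0 < w a → I a = G a + Hf a := by
      intro a ha
      rw [hI, hG, hHf]
      simp only
      rw [integral_congr_ae (hchain a ha), integral_add (hga a ha) (hha a ha)]
    have hHmsum : Hm = ∑ a, w a * Hf a := hint_eq _ hHm_int
    have hInonneg : ∀ a, 0 < w a → 0 ≤ I a := fun a ha =>
      integral_llr_nonneg'_s4 (μ a) ν (hac a ha) (hcase a ha)
    have hGnonneg : ∀ a, 0 < w a → 0 ≤ G a := fun a ha =>
      integral_llr_nonneg'_s4 (μ a) m (hμm a ha) (hga a ha)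
    have hHmnonneg : 0 ≤ Hm := integral_llr_nonneg'_s4 m ν hmν hHm_int
    -- rewrite the three klDiv expressions
    have hL : ∑ a, ENNReal.ofReal (w a) * klDiv (μ a) ν
        = ENNReal.ofReal (∑ a, w a * (if 0 < w a then I a else 0)) := by
      rw [ENNReal.ofReal_sum_of_nonneg]
      · refine Finset.sum_congr rfl fun a _ => ?_
        rcases lt_or_ge 0 (w a) with ha | ha
        · rw [if_pos ha, klDiv, if_pos ⟨hac a ha, hcase a ha⟩, ← ENNReal.ofReal_mul (hw0 a)]
        · rw [hwzero a (not_lt.mpr ha)]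
          simp
      · intro a _
        rcases lt_or_ge 0 (w a) with ha | ha
        · rw [if_pos ha]; exact mul_nonneg (hw0 a) (hInonneg a ha)
        · rw [hwzero a (not_lt.mpr ha)]; simp
    have hM : ∑ a, ENNReal.ofReal (w a) * klDiv (μ a) m
        = ENNReal.ofReal (∑ a, w a * (if 0 < w a then G a else 0)) := by
      rw [ENNReal.ofReal_sum_of_nonneg]
      · refine Finset.sum_congr rfl fun a _ => ?_
        rcases lt_or_ge 0 (w a) with ha | ha
        · rw [if_pos ha, klDiv, if_pos ⟨hμm a ha, hga a ha⟩, ← ENNReal.ofReal_mul (hw0 a)]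
        · rw [hwzero a (not_lt.mpr ha)]
          simp
      · intro a _
        rcases lt_or_ge 0 (w a) with ha | ha
        · rw [if_pos ha]; exact mul_nonneg (hw0 a) (hGnonneg a ha)
        · rw [hwzero a (not_lt.mpr ha)]; simp
    have hR : klDiv m ν = ENNReal.ofReal Hm := by
      rw [klDiv, if_pos ⟨hmν, hHm_int⟩]
    rw [hL, hM, hR, ← ENNReal.ofReal_add ?h1 hHmnonneg]
    case h1 =>
      refine Finset.sum_nonneg fun a _ => ?_
      rcases lt_or_ge 0 (w a) with ha | ha
      · rw [if_pos ha]; exact mul_nonneg (hw0 a) (hGnonneg a ha)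
      · rw [hwzero a (not_lt.mpr ha)]; simp
    congr 1
    rw [hHmsum, ← Finset.sum_add_distrib]
    refine Finset.sum_congr rfl fun a _ => ?_
    rcases lt_or_ge 0 (w a) with ha | ha
    · rw [if_pos ha, if_pos ha, hIdecomp a ha]; ring
    · rw [hwzero a (not_lt.mpr ha)]; ring
  · -- degenerate case: some component divergence is infinite
    push_neg at hcase
    obtain ⟨a0, ha0, hnint⟩ := hcase
    have hca0 : ENNReal.ofReal (w a0) ≠ 0 := by simp [ENNReal.ofReal_eq_zero, not_le, ha0]
    have hLtop : ∑ a, ENNReal.ofReal (w a) * klDiv (μ a) ν = ⊤ := by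
      rw [ENNReal.sum_eq_top]
      refine ⟨a0, Finset.mem_univ a0, ?_⟩
      rw [klDiv, if_neg (fun h => hnint h.2), ENNReal.mul_top hca0]
    rw [hLtop]
    by_cases hmint : Integrable (llr m ν) m
    · -- then klDiv (μ a0) m must be ⊤
      have hga0 : ¬ Integrable (llr (μ a0) m) (μ a0) := by
        intro hga
        have hha0 : Integrable (llr m ν) (μ a0) := (hint_iff _).mp hmint a0 ha0
        have : Integrable (fun x => llr (μ a0) m x + llr m ν x) (μ a0) := hga.add hha0
        exact hnint (this.congr (llr_chain (μ a0) m ν (hμm a0 ha0) hmν).symm)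
      have : ∑ a, ENNReal.ofReal (w a) * klDiv (μ a) m = ⊤ := by
        rw [ENNReal.sum_eq_top]
        refine ⟨a0, Finset.mem_univ a0, ?_⟩
        rw [klDiv, if_neg (fun h => hga0 h.2), ENNReal.mul_top hca0]
      rw [this]; simp
    · have : klDiv m ν = ⊤ := by rw [klDiv, if_neg (fun h => hmint h.2)]
      rw [this]; simp
end

section
/- Let X be a measurable space, let p and q be probability measures on X with p ≪ q, and let r, s ∈ (0, 1). On the space Option X define the Bernoulli measures μ = (1 − r) • δ(none) + r • (map some p) and ν = (1 − s) • δ(none) + s • (map some q), where map some denotes the pushforward under the embedding some : X → Option X. Then klDiv(μ, ν) = (1 − r)·log((1 − r)/(1 − s)) + r·log(r/s) + r·klDiv(p, q). -/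
open MeasureTheory
open scoped ENNReal Classical

/-- The measurable space on `Option X`, transported from `X ⊕ PUnit` (so `{none}` is
measurable and `some` is a measurable embedding). -/
noncomputable instance optionMeasurableSpace {X : Type*} [MeasurableSpace X] :
    MeasurableSpace (Option X) :=
  MeasurableSpace.comap ((Equiv.optionEquivSumPUnit X : Option X ≃ (X ⊕ PUnit.{1}))) inferInstance

section Aux

variable {X : Type*} [MeasurableSpace X]

/-- The option equiv as a measurable equiv. -/
noncomputable def optionMEquiv (X : Type*) [MeasurableSpace X] :
    Option X ≃ᵐ (X ⊕ PUnit.{1}) where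
  toEquiv := Equiv.optionEquivSumPUnit X
  measurable_toFun := fun s hs => ⟨s, hs, rfl⟩
  measurable_invFun := by
    intro s hs
    obtain ⟨t, ht, rfl⟩ := hs
    simpa [Set.preimage_preimage] using ht

lemma measurableEmbedding_some :
    MeasurableEmbedding (Option.some : X → Option X) := by
  have h : (Option.some : X → Option X) = (optionMEquiv X).symm ∘ Sum.inl := by
    funext x; rfl
  have hinl : MeasurableEmbedding (Sum.inl : X → X ⊕ PUnit.{1}) :=
    ⟨Sum.inl_injective, measurable_inl, fun _ hs => hs.inl_image⟩
  rw [h]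
  exact ((optionMEquiv X).symm.measurableEmbedding).comp hinl

lemma integrable_dirac_of_stronglyMeasurable {α : Type*} [MeasurableSpace α] {g : α → ℝ}
    (hg : Measurable g) (a : α) : Integrable g (Measure.dirac a) := by
  refine ⟨hg.stronglyMeasurable.aestronglyMeasurable, ?_⟩
  have : (∫⁻ x, (‖g x‖₊ : ℝ≥0∞) ∂Measure.dirac a) = (‖g a‖₊ : ℝ≥0∞) :=
    lintegral_dirac' a hg.nnnorm.coe_nnreal_ennreal
  rw [HasFiniteIntegral]
  exact lt_of_eq_of_lt this ENNReal.coe_lt_top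

lemma withDensity_dirac_eq {α : Type*} [MeasurableSpace α] {f : α → ℝ≥0∞}
    (hf : Measurable f) (a : α) :
    (Measure.dirac a).withDensity f = f a • Measure.dirac a := by
  ext s hs
  rw [withDensity_apply _ hs, setLIntegral_dirac' hf hs, Measure.smul_apply,
    Measure.dirac_apply' _ hs]
  by_cases h : a ∈ s <;> simp [h]

lemma withDensity_map_embedding {α β : Type*} [MeasurableSpace α] [MeasurableSpace β]
    {g : α → β} (hg : MeasurableEmbedding g) (μ : Measure α) {f : β → ℝ≥0∞}
    (hf : Measurable f) :
    (μ.map g).withDensity f = (μ.withDensity (f ∘ g)).map g := by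
  ext s hs
  rw [withDensity_apply _ hs, hg.map_apply, withDensity_apply _ (hg.measurable hs),
    setLIntegral_map hs hf hg.measurable]
  rfl

lemma bernoulli_kl_nonneg {r s : ℝ} (hr : r ∈ Set.Ioo (0 : ℝ) 1) (hs : s ∈ Set.Ioo (0 : ℝ) 1) :
    0 ≤ (1 - r) * Real.log ((1 - r) / (1 - s)) + r * Real.log (r / s) := by
  obtain ⟨hr0, hr1⟩ := hr
  obtain ⟨hs0, hs1⟩ := hs
  have h1 : Real.log ((1 - s) / (1 - r)) ≤ (1 - s) / (1 - r) - 1 :=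
    Real.log_le_sub_one_of_pos (div_pos (by linarith) (by linarith))
  have h2 : Real.log (s / r) ≤ s / r - 1 := Real.log_le_sub_one_of_pos (by positivity)
  have e1 : Real.log ((1 - r) / (1 - s)) = - Real.log ((1 - s) / (1 - r)) := by
    rw [← Real.log_inv, inv_div]
  have e2 : Real.log (r / s) = - Real.log (s / r) := by
    rw [← Real.log_inv, inv_div]
  have k1 : (1 - r) * ((1 - s) / (1 - r)) = 1 - s := by
    rw [mul_comm]; exact div_mul_cancel₀ _ (by linarith)
  have k2 : r * (s / r) = s := by
    rw [mul_comm]; exact div_mul_cancel₀ _ (by linarith)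
  nlinarith [mul_le_mul_of_nonneg_left h1 (by linarith : (0:ℝ) ≤ 1 - r),
    mul_le_mul_of_nonneg_left h2 hr0.le]

lemma my_integral_llr_nonneg {α : Type*} [MeasurableSpace α] (p q : Measure α)
    [IsProbabilityMeasure p] [IsProbabilityMeasure q] (hpq : p ≪ q)
    (h : Integrable (llr p q) p) : 0 ≤ ∫ x, llr p q x ∂p := by
  set D := p.rnDeriv q with hD_def
  have hD : Measurable D := Measure.measurable_rnDeriv p q
  have hmul : ∀ a : ℝ≥0∞, a * a⁻¹ ≤ 1 := by
    intro a
    rcases eq_or_ne a 0 with rfl | h0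
    · simp
    rcases eq_or_ne a ∞ with rfl | ht
    · simp
    · simp [ENNReal.mul_inv_cancel h0 ht]
  have hinv_lint : ∫⁻ x, (D x)⁻¹ ∂p ≤ 1 := by
    have hwd : q.withDensity D = p := Measure.withDensity_rnDeriv_eq p q hpq
    calc ∫⁻ x, (D x)⁻¹ ∂p = ∫⁻ x, (D x)⁻¹ ∂(q.withDensity D) := by rw [hwd]
    _ = ∫⁻ x, D x * (D x)⁻¹ ∂q := by
        exact lintegral_withDensity_eq_lintegral_mul q hD hD.inv
    _ ≤ ∫⁻ _, 1 ∂q := lintegral_mono fun x => hmul (D x)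
    _ = 1 := by simp
  have hpos : ∀ᵐ x ∂p, 0 < D x := Measure.rnDeriv_pos hpq
  have hlt : ∀ᵐ x ∂p, D x < ∞ := hpq.ae_le (Measure.rnDeriv_lt_top p q)
  have hInt_inv : Integrable (fun x => ((D x)⁻¹).toReal) p := by
    refine ⟨(by fun_prop : Measurable fun x => ((D x)⁻¹).toReal).aestronglyMeasurable, ?_⟩
    rw [HasFiniteIntegral]
    have hb : ∀ x, (‖((D x)⁻¹).toReal‖₊ : ℝ≥0∞) ≤ (D x)⁻¹ := by
      intro x
      rw [Real.nnnorm_of_nonneg ENNReal.toReal_nonneg]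
      exact ENNReal.coe_toNNReal_le_self
    exact lt_of_le_of_lt (le_trans (lintegral_mono hb) hinv_lint) (by norm_num)
  have hle : ∀ᵐ x ∂p, - llr p q x ≤ ((D x)⁻¹).toReal - 1 := by
    filter_upwards [hpos, hlt] with x h0 htop
    have ht : 0 < (D x).toReal := ENNReal.toReal_pos h0.ne' htop.ne
    have hlog : Real.log ((D x).toReal)⁻¹ ≤ ((D x).toReal)⁻¹ - 1 :=
      Real.log_le_sub_one_of_pos (by positivity)
    rw [llr, ← Real.log_inv, ENNReal.toReal_inv]
    exact hlog
  have hmono : ∫ x, - llr p q x ∂p ≤ ∫ x, (((D x)⁻¹).toReal - 1) ∂p :=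
    integral_mono_ae h.neg (hInt_inv.sub (integrable_const 1)) hle
  have hinv_int_le : ∫ x, ((D x)⁻¹).toReal ∂p ≤ 1 := by
    have hfin : ∀ᵐ x ∂p, (D x)⁻¹ < ∞ := by
      filter_upwards [hpos] with x h0
      simpa [ENNReal.inv_lt_top] using h0
    rw [integral_toReal (by fun_prop) hfin]
    calc (∫⁻ x, (D x)⁻¹ ∂p).toReal ≤ (1 : ℝ≥0∞).toReal :=
      ENNReal.toReal_mono (by norm_num) hinv_lint
    _ = 1 := by simp
  rw [integral_neg] at hmono
  rw [integral_sub hInt_inv (integrable_const 1)] at hmono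
  simp only [integral_const, measure_univ, probReal_univ, ENNReal.toReal_one, smul_eq_mul, one_mul] at hmono
  linarith

end Aux

/-- KL divergence between two Bernoulli random-finite-set measures on `Option X` with
existence probabilities `r, s ∈ (0,1)` and single-target densities `p ≪ q`:
`D(μ‖ν) = (1−r)log((1−r)/(1−s)) + r log(r/s) + r D(p‖q)`. -/
theorem klDiv_bernoulli {X : Type*} [MeasurableSpace X]
    (p q : Measure X) [IsProbabilityMeasure p] [IsProbabilityMeasure q] (hpq : p ≪ q)
    (r s : ℝ) (hr : r ∈ Set.Ioo (0 : ℝ) 1) (hs : s ∈ Set.Ioo (0 : ℝ) 1) :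
    klDiv
      (ENNReal.ofReal (1 - r) • Measure.dirac (none : Option X)
        + ENNReal.ofReal r • p.map Option.some)
      (ENNReal.ofReal (1 - s) • Measure.dirac (none : Option X)
        + ENNReal.ofReal s • q.map Option.some)
    = ENNReal.ofReal ((1 - r) * Real.log ((1 - r) / (1 - s)) + r * Real.log (r / s))
      + ENNReal.ofReal r * klDiv p q := by
  obtain ⟨hr0, hr1⟩ := hr
  obtain ⟨hs0, hs1⟩ := hs
  set a := ENNReal.ofReal (1 - r) with ha_def
  set b := ENNReal.ofReal r with hb_def
  set c := ENNReal.ofReal (1 - s) with hc_def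
  set d := ENNReal.ofReal s with hd_def
  have ha0 : a ≠ 0 := by simp [ha_def, ENNReal.ofReal_eq_zero]; linarith
  have hb0 : b ≠ 0 := by simp [hb_def, ENNReal.ofReal_eq_zero]; linarith
  have hc0 : c ≠ 0 := by simp [hc_def, ENNReal.ofReal_eq_zero]; linarith
  have hd0 : d ≠ 0 := by simp [hd_def, ENNReal.ofReal_eq_zero]; linarith
  have haT : a ≠ ∞ := ENNReal.ofReal_ne_top
  have hbT : b ≠ ∞ := ENNReal.ofReal_ne_top
  have hcT : c ≠ ∞ := ENNReal.ofReal_ne_top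
  have hdT : d ≠ ∞ := ENNReal.ofReal_ne_top
  have hsome := (measurableEmbedding_some (X := X))
  set μ := a • Measure.dirac (none : Option X) + b • p.map Option.some with hμ_def
  set ν := c • Measure.dirac (none : Option X) + d • q.map Option.some with hν_def
  set D := p.rnDeriv q with hD_def
  have hD : Measurable D := Measure.measurable_rnDeriv p q
  -- the density of μ w.r.t. ν
  set f : Option X → ℝ≥0∞ := fun o => o.elim (a / c) (fun x => (b / d) * D x) with hf_def
  have hf : Measurable f := by
    have hfc : f = Sum.elim (fun x => (b / d) * D x) (fun _ => a / c) ∘ (optionMEquiv X) := by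
      funext o; cases o <;> rfl
    rw [hfc]
    exact (Measurable.sumElim (by fun_prop) measurable_const).comp (optionMEquiv X).measurable
  haveI : IsProbabilityMeasure (p.map Option.some) :=
    Measure.isProbabilityMeasure_map hsome.measurable.aemeasurable
  haveI : IsProbabilityMeasure (q.map Option.some) :=
    Measure.isProbabilityMeasure_map hsome.measurable.aemeasurable
  haveI : IsFiniteMeasure μ := by
    constructor
    rw [hμ_def]
    simp only [Measure.coe_add, Pi.add_apply, Measure.smul_apply, smul_eq_mul, measure_univ,
      mul_one]
    exact ENNReal.add_lt_top.mpr ⟨haT.lt_top, hbT.lt_top⟩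
  haveI : IsFiniteMeasure ν := by
    constructor
    rw [hν_def]
    simp only [Measure.coe_add, Pi.add_apply, Measure.smul_apply, smul_eq_mul, measure_univ,
      mul_one]
    exact ENNReal.add_lt_top.mpr ⟨hcT.lt_top, hdT.lt_top⟩
  have hν_eq : ν.withDensity f = μ := by
    rw [hν_def, withDensity_add_measure, withDensity_smul_measure, withDensity_smul_measure,
      withDensity_dirac_eq hf, withDensity_map_embedding hsome q hf]
    have hfnone : f none = a / c := rfl
    have hfsome : (f ∘ Option.some) = fun x => (b / d) * D x := rfl
    rw [hfnone, hfsome]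
    have h1 : c • ((a / c) • Measure.dirac (none : Option X)) = a • Measure.dirac none := by
      rw [smul_smul, ENNReal.mul_div_cancel hc0 hcT]
    have h2 : q.withDensity (fun x => (b / d) * D x) = (b / d) • p := by
      rw [show (fun x => (b / d) * D x) = (b / d) • D from rfl, withDensity_smul _ hD,
        hD_def, Measure.withDensity_rnDeriv_eq p q hpq]
    rw [h1, h2, Measure.map_smul, smul_smul, ENNReal.mul_div_cancel hd0 hdT, hμ_def]
  have hac : μ ≪ ν := by
    rw [← hν_eq]; exact withDensity_absolutelyContinuous ν f
  have hrn : f =ᵐ[ν] μ.rnDeriv ν :=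
    Measure.eq_rnDeriv hf Measure.MutuallySingular.zero_left (by rw [zero_add, hν_eq])
  set g : Option X → ℝ := fun o => Real.log (f o).toReal with hg_def
  have hg : Measurable g := Real.measurable_log.comp (ENNReal.measurable_toReal.comp hf)
  have hllr_ν : llr μ ν =ᵐ[ν] g := by
    filter_upwards [hrn] with o ho
    rw [llr, ← ho]
  have hllr_μ : llr μ ν =ᵐ[μ] g := hac.ae_le hllr_ν
  -- transfer to the dirac component
  have hllr_δ : llr μ ν =ᵐ[Measure.dirac (none : Option X)] g := by
    have h1 : a • Measure.dirac (none : Option X) ≤ μ := by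
      rw [hμ_def]; exact Measure.le_add_right (le_refl _)
    have h2 : (∀ᵐ o ∂(a • Measure.dirac (none : Option X)), llr μ ν o = g o) :=
      (Measure.absolutelyContinuous_of_le h1).ae_le hllr_μ
    exact ae_iff.2 (by
      have := ae_iff.1 h2
      rw [Measure.smul_apply, smul_eq_mul, mul_eq_zero] at this
      exact this.resolve_left ha0)
  -- transfer to the map component
  have hllr_map : (∀ᵐ o ∂(p.map Option.some), llr μ ν o = g o) := by
    have h1 : b • p.map Option.some ≤ μ := by
      rw [hμ_def]; exact Measure.le_add_left (le_refl _)
    exact ae_iff.2 (by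
      have := ae_iff.1 ((Measure.absolutelyContinuous_of_le h1).ae_le hllr_μ)
      rw [Measure.smul_apply, smul_eq_mul, mul_eq_zero] at this
      exact this.resolve_left hb0)
  have hbd : (b / d).toReal = r / s := by
    rw [ENNReal.toReal_div, hb_def, hd_def, ENNReal.toReal_ofReal hr0.le,
      ENNReal.toReal_ofReal hs0.le]
  have hac' : (a / c).toReal = (1 - r) / (1 - s) := by
    rw [ENNReal.toReal_div, ha_def, hc_def, ENNReal.toReal_ofReal (by linarith),
      ENNReal.toReal_ofReal (by linarith)]
  have hpos : ∀ᵐ x ∂p, 0 < D x := Measure.rnDeriv_pos hpq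
  have hlt : ∀ᵐ x ∂p, D x < ∞ := hpq.ae_le (Measure.rnDeriv_lt_top p q)
  have hcomp : ∀ᵐ x ∂p, llr μ ν (Option.some x) = Real.log (r / s) + llr p q x := by
    have h1 : ∀ᵐ x ∂p, llr μ ν (Option.some x) = g (Option.some x) :=
      hsome.ae_map_iff.mp hllr_map
    filter_upwards [h1, hpos, hlt] with x hx h0 htop
    rw [hx]
    show Real.log ((b / d) * D x).toReal = Real.log (r / s) + llr p q x
    have hbd0 : b / d ≠ 0 := by
      simp only [ne_eq, ENNReal.div_eq_zero_iff, not_or]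
      exact ⟨hb0, hdT⟩
    have hbdT : b / d ≠ ∞ := by
      simp only [ne_eq, ENNReal.div_eq_top, not_and_or, not_or]
      exact ⟨Or.inr hd0, Or.inl hbT⟩
    rw [ENNReal.toReal_mul, Real.log_mul, hbd, llr]
    · rw [hbd]
      have : (0:ℝ) < r / s := by positivity
      linarith [this]
    · exact ENNReal.toReal_ne_zero.mpr ⟨h0.ne', htop.ne⟩
  -- integrability transfer
  have hint_comp_iff :
      Integrable (llr μ ν ∘ Option.some) p ↔ Integrable (llr p q) p := by
    constructor
    · intro h2
      have h3 : Integrable ((fun _ : X => Real.log (r / s)) + llr p q) p := by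
        refine h2.congr ?_
        filter_upwards [hcomp] with x hx
        simpa [Function.comp] using hx
      exact (integrable_add_iff_integrable_right (integrable_const _)).mp h3
    · intro hI
      have h3 : Integrable ((fun _ : X => Real.log (r / s)) + llr p q) p :=
        (integrable_const _).add hI
      refine h3.congr ?_
      filter_upwards [hcomp] with x hx
      simpa [Function.comp] using hx.symm
  have hInt_δ : Integrable (llr μ ν) (Measure.dirac (none : Option X)) :=
    (integrable_dirac_of_stronglyMeasurable hg none).congr hllr_δ.symm
  have hInt_iff : Integrable (llr μ ν) μ ↔ Integrable (llr p q) p := by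
    rw [hμ_def, integrable_add_measure, integrable_smul_measure ha0 haT,
      integrable_smul_measure hb0 hbT, hsome.integrable_map_iff, hint_comp_iff]
    exact ⟨fun h => h.2, fun h => ⟨hInt_δ, h⟩⟩
  by_cases hI : Integrable (llr p q) p
  · -- both sides finite
    have hIntμ : Integrable (llr μ ν) μ := hInt_iff.mpr hI
    have hint_δval : ∫ o, llr μ ν o ∂(Measure.dirac (none : Option X))
        = Real.log ((1 - r) / (1 - s)) := by
      rw [integral_congr_ae hllr_δ, integral_dirac' g none hg.stronglyMeasurable]
      show Real.log (a / c).toReal = _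
      rw [hac']
    have hint_mapval : ∫ o, llr μ ν o ∂(p.map Option.some)
        = Real.log (r / s) + ∫ x, llr p q x ∂p := by
      rw [hsome.integral_map]
      rw [integral_congr_ae
        (show (fun x => llr μ ν (Option.some x)) =ᵐ[p]
          (fun x => Real.log (r / s) + llr p q x) from hcomp)]
      rw [integral_add (integrable_const _) hI, integral_const, probReal_univ]
      simp
    have hI1 : Integrable (llr μ ν) (a • Measure.dirac (none : Option X)) :=
      (integrable_smul_measure ha0 haT).mpr hInt_δ
    have hI2 : Integrable (llr μ ν) (b • p.map Option.some) :=
      (integrable_smul_measure hb0 hbT).mpr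
        (hsome.integrable_map_iff.mpr (hint_comp_iff.mpr hI))
    have htotal : ∫ o, llr μ ν o ∂μ
        = (1 - r) * Real.log ((1 - r) / (1 - s))
          + r * (Real.log (r / s) + ∫ x, llr p q x ∂p) := by
      rw [hμ_def, integral_add_measure hI1 hI2, integral_smul_measure, integral_smul_measure,
        hint_δval, hint_mapval, ha_def, hb_def, ENNReal.toReal_ofReal (by linarith),
        ENNReal.toReal_ofReal hr0.le]
      simp only [smul_eq_mul]
    have hK : 0 ≤ (1 - r) * Real.log ((1 - r) / (1 - s)) + r * Real.log (r / s) :=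
      bernoulli_kl_nonneg ⟨hr0, hr1⟩ ⟨hs0, hs1⟩
    have hI0 : 0 ≤ ∫ x, llr p q x ∂p := my_integral_llr_nonneg p q hpq hI
    rw [klDiv, if_pos ⟨hac, hIntμ⟩, klDiv, if_pos ⟨hpq, hI⟩, htotal,
      show (1 - r) * Real.log ((1 - r) / (1 - s))
          + r * (Real.log (r / s) + ∫ x, llr p q x ∂p)
        = ((1 - r) * Real.log ((1 - r) / (1 - s)) + r * Real.log (r / s))
          + r * ∫ x, llr p q x ∂p by ring,
      ENNReal.ofReal_add hK (mul_nonneg hr0.le hI0), ENNReal.ofReal_mul hr0.le]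
  · -- both sides infinite
    have h1 : klDiv p q = ⊤ := by
      rw [klDiv, if_neg]
      exact fun h => hI h.2
    have h2 : klDiv μ ν = ⊤ := by
      rw [klDiv, if_neg]
      exact fun h => hI (hInt_iff.mp h.2)
    rw [h1, h2, ENNReal.mul_top hb0, add_top]
end

section
/- Let d be a positive natural number, let m₁, m₂ ∈ ℝ^d (as EuclideanSpace ℝ (Fin d)), and let P₁, P₂ be positive-definite real d×d matrices. Then the Kullback–Leibler divergence between the corresponding multivariate Gaussian measures satisfies klDiv(N(m₁, P₁), N(m₂, P₂)) = (1/2) · ( trace(P₂⁻¹ P₁) − log(det P₁ / det P₂) − d + (m₂ − m₁)ᵀ P₂⁻¹ (m₂ − m₁) ). -/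
open MeasureTheory
open scoped ENNReal Classical

/-- Density of the multivariate Gaussian with mean `m` and covariance matrix `S` on `ℝ^d`. -/
noncomputable def gaussianPdf {d : ℕ} (m : EuclideanSpace ℝ (Fin d))
    (S : Matrix (Fin d) (Fin d) ℝ) (x : EuclideanSpace ℝ (Fin d)) : ℝ≥0∞ :=
  ENNReal.ofReal ((Real.sqrt ((2 * Real.pi) ^ d * S.det))⁻¹ *
    Real.exp (-(1 / 2) * dotProduct (WithLp.ofLp (x - m)) (S⁻¹.mulVec (WithLp.ofLp (x - m)))))

/-- The multivariate Gaussian probability measure `N(m, S)` on `ℝ^d`, for a mean vector `m`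
and a (positive-definite) covariance matrix `S`. -/
noncomputable def gaussianMeasure {d : ℕ} (m : EuclideanSpace ℝ (Fin d))
    (S : Matrix (Fin d) (Fin d) ℝ) : Measure (EuclideanSpace ℝ (Fin d)) :=
  volume.withDensity (gaussianPdf m S)


open scoped MatrixOrder in
noncomputable def Matrix.PosSemidef.sqrt {n : Type*} [Fintype n] [DecidableEq n]
    {A : Matrix n n ℝ} (_ : A.PosSemidef) : Matrix n n ℝ := CFC.sqrt A

open scoped MatrixOrder in
lemma Matrix.PosSemidef.sqrt_mul_self {n : Type*} [Fintype n] [DecidableEq n]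
    {A : Matrix n n ℝ} (hA : A.PosSemidef) : hA.sqrt * hA.sqrt = A :=
  CFC.sqrt_mul_sqrt_self A (Matrix.nonneg_iff_posSemidef.mpr hA)

open scoped MatrixOrder in
lemma Matrix.PosSemidef.posSemidef_sqrt {n : Type*} [Fintype n] [DecidableEq n]
    {A : Matrix n n ℝ} (hA : A.PosSemidef) : hA.sqrt.PosSemidef :=
  Matrix.nonneg_iff_posSemidef.mp (CFC.sqrt_nonneg A)

namespace GaussKL

open Real Matrix

lemma int_g0 : Integrable (fun x : ℝ => exp (-(1/2) * x ^ 2)) :=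
  integrable_exp_neg_mul_sq (by norm_num)

lemma int_g1 : Integrable (fun x : ℝ => x * exp (-(1/2) * x ^ 2)) :=
  integrable_mul_exp_neg_mul_sq (by norm_num)

lemma rpow_two_eq (x : ℝ) : x ^ (2 : ℝ) = x ^ (2 : ℕ) := by
  rw [show (2:ℝ) = ((2:ℕ):ℝ) by norm_num, Real.rpow_natCast]

lemma int_g2 : Integrable (fun x : ℝ => x ^ 2 * exp (-(1/2) * x ^ 2)) := by
  have h := integrable_rpow_mul_exp_neg_mul_sq (b := 1/2) (by norm_num)
    (s := 2) (by norm_num)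
  have he : (fun x : ℝ => x ^ (2:ℝ) * exp (-(1/2) * x ^ 2))
      = fun x : ℝ => x ^ 2 * exp (-(1/2) * x ^ 2) := funext fun x => by rw [rpow_two_eq]
  exact he ▸ h

lemma val_g0 : ∫ x : ℝ, exp (-(1/2) * x ^ 2) = √(2 * π) := by
  rw [integral_gaussian]
  congr 1
  rw [eq_comm, eq_div_iff (by norm_num)]
  ring

lemma val_g1 : ∫ x : ℝ, x * exp (-(1/2) * x ^ 2) = 0 := by
  have h := integral_neg_eq_self (fun x : ℝ => x * exp (-(1/2) * x ^ 2)) volume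
  simp only [neg_sq, neg_mul] at h
  rw [integral_neg] at h
  simp only [neg_mul]
  linarith

lemma val_g2 : ∫ x : ℝ, x ^ 2 * exp (-(1/2) * x ^ 2) = √(2 * π) := by
  have habs : ∫ x : ℝ, x ^ 2 * exp (-(1/2) * x ^ 2)
      = 2 * ∫ x in Set.Ioi (0:ℝ), x ^ 2 * exp (-(1/2) * x ^ 2) := by
    rw [← integral_comp_abs (f := fun x : ℝ => x ^ 2 * exp (-(1/2) * x ^ 2))]
    congr 1 with x
    simp [sq_abs]
  have hval : ∫ x in Set.Ioi (0:ℝ), x ^ 2 * exp (-(1/2) * x ^ 2)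
      = (1/2 : ℝ) ^ (-(3:ℝ)/2) * (1/2) * Real.Gamma (3/2) := by
    have h := integral_rpow_mul_exp_neg_mul_rpow (p := 2) (q := 2) (b := 1/2)
      (by norm_num) (by norm_num) (by norm_num)
    have h2 : ∫ x in Set.Ioi (0:ℝ), x ^ (2:ℝ) * exp (-(1/2) * x ^ (2:ℝ))
        = ∫ x in Set.Ioi (0:ℝ), x ^ 2 * exp (-(1/2) * x ^ 2) := by
      refine setIntegral_congr_fun measurableSet_Ioi fun x _ => ?_
      rw [rpow_two_eq]
    rw [h2] at h
    rw [h]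
    norm_num
  have hGamma : Real.Gamma (3/2) = √π / 2 := by
    have h1 : (3/2 : ℝ) = 1/2 + 1 := by norm_num
    rw [h1, Real.Gamma_add_one (by norm_num), Real.Gamma_one_half_eq]
    ring
  have hpow : (1/2 : ℝ) ^ (-(3:ℝ)/2) = 2 * √2 := by
    rw [show (1/2:ℝ) = 2⁻¹ by norm_num, Real.inv_rpow (by norm_num),
      ← Real.rpow_neg (by norm_num)]
    rw [show -(-(3:ℝ)/2) = 1 + 1/2 by norm_num, Real.rpow_add (by norm_num),
      Real.rpow_one, ← Real.sqrt_eq_rpow]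
  rw [habs, hval, hGamma, hpow,
    show √(2*π) = √2 * √π from (Real.sqrt_mul (by norm_num) π)]
  ring


variable {d : ℕ}

/-- standard gaussian kernel on `Fin d → ℝ` -/
noncomputable def phi (y : Fin d → ℝ) : ℝ := ∏ i, exp (-(1/2) * (y i) ^ 2)

lemma phi_eq (y : Fin d → ℝ) : phi y = exp (-(1/2) * (y ⬝ᵥ y)) := by
  rw [phi, ← Real.exp_sum, dotProduct, Finset.mul_sum]
  congr 1
  refine Finset.sum_congr rfl fun i _ => ?_
  ring

lemma integrable_phi : Integrable (phi (d := d)) :=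
  Integrable.fintype_prod (f := fun _ : Fin d => fun x : ℝ => exp (-(1/2) * x ^ 2))
    (fun _ => int_g0)

lemma val_phi : ∫ y : Fin d → ℝ, phi y = √(2 * π) ^ d := by
  simp only [phi]
  rw [volume_pi, integral_fintype_prod_eq_pow (ι := Fin d) (f := fun x : ℝ => exp (-(1/2) * x ^ 2))]
  rw [val_g0, Fintype.card_fin]

/-- pairs -/
lemma phi_pair_eq (i j : Fin d) :
    (fun y : Fin d → ℝ => phi y * (y i * y j))
      = fun y => ∏ k, (exp (-(1/2) * (y k) ^ 2) *
          ((if k = i then y k else 1) * (if k = j then y k else 1))) := by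
  funext y
  rw [Finset.prod_mul_distrib, Finset.prod_mul_distrib, Finset.prod_ite_eq',
    Finset.prod_ite_eq']
  simp [phi]

lemma integrable_pair_factor (i j k : Fin d) :
    Integrable (fun x : ℝ => exp (-(1/2) * x ^ 2) *
      ((if k = i then x else 1) * (if k = j then x else 1))) := by
  by_cases hi : k = i
  · by_cases hj : k = j
    · simp only [if_pos hi, if_pos hj]
      exact int_g2.congr (Filter.Eventually.of_forall fun x => by ring)
    · simp only [if_pos hi, if_neg hj, mul_one]
      exact int_g1.congr (Filter.Eventually.of_forall fun x => by ring)
  · by_cases hj : k = j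
    · simp only [if_neg hi, if_pos hj, one_mul]
      exact int_g1.congr (Filter.Eventually.of_forall fun x => by ring)
    · simp only [if_neg hi, if_neg hj, mul_one, one_mul]
      exact int_g0

lemma integrable_phi_pair (i j : Fin d) :
    Integrable (fun y : Fin d → ℝ => phi y * (y i * y j)) := by
  rw [phi_pair_eq]
  exact Integrable.fintype_prod (fun k => integrable_pair_factor i j k)

lemma val_phi_pair (i j : Fin d) :
    ∫ y : Fin d → ℝ, phi y * (y i * y j) = if i = j then √(2 * π) ^ d else 0 := by
  rw [phi_pair_eq]
  rw [volume_pi, integral_fintype_prod_eq_prod (ι := Fin d)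
    (f := fun k (x : ℝ) => exp (-(1/2) * x ^ 2) *
      ((if k = i then x else 1) * (if k = j then x else 1)))]
  by_cases hij : i = j
  · subst hij
    rw [if_pos rfl]
    have : ∀ k : Fin d, (∫ x : ℝ, exp (-(1/2) * x ^ 2) *
        ((if k = i then x else 1) * (if k = i then x else 1))) = √(2 * π) := by
      intro k
      by_cases hk : k = i
      · have he : (fun x : ℝ => exp (-(1/2) * x ^ 2) *
            ((if k = i then x else 1) * (if k = i then x else 1)))
            = fun x : ℝ => x ^ 2 * exp (-(1/2) * x ^ 2) := by
          funext x
          rw [if_pos hk]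
          ring
        rw [he]
        exact val_g2
      · have he : (fun x : ℝ => exp (-(1/2) * x ^ 2) *
            ((if k = i then x else 1) * (if k = i then x else 1)))
            = fun x : ℝ => exp (-(1/2) * x ^ 2) := by
          funext x
          rw [if_neg hk]
          ring
        rw [he]
        exact val_g0
    rw [Finset.prod_congr rfl fun k _ => this k, Finset.prod_const, Finset.card_univ,
      Fintype.card_fin]
  · rw [if_neg hij]
    refine Finset.prod_eq_zero (Finset.mem_univ i) ?_
    have he : (fun x : ℝ => exp (-(1/2) * x ^ 2) *
        ((if i = i then x else 1) * (if i = j then x else 1)))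
        = fun x : ℝ => x * exp (-(1/2) * x ^ 2) := by
      funext x
      rw [if_pos rfl, if_neg hij]
      ring
    rw [he]
    exact val_g1

/-- linear -/
lemma phi_single_eq (i : Fin d) :
    (fun y : Fin d → ℝ => phi y * y i)
      = fun y => ∏ k, (exp (-(1/2) * (y k) ^ 2) * (if k = i then y k else 1)) := by
  funext y
  rw [Finset.prod_mul_distrib, Finset.prod_ite_eq']
  simp [phi]

lemma integrable_phi_single (i : Fin d) :
    Integrable (fun y : Fin d → ℝ => phi y * y i) := by
  rw [phi_single_eq]
  refine Integrable.fintype_prod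
    (f := fun k (x : ℝ) => exp (-(1/2) * x ^ 2) * (if k = i then x else 1)) fun k => ?_
  by_cases hk : k = i
  · simp only [if_pos hk]
    exact int_g1.congr (Filter.Eventually.of_forall fun x => by ring)
  · simp only [if_neg hk, mul_one]
    exact int_g0

lemma val_phi_single (i : Fin d) : ∫ y : Fin d → ℝ, phi y * y i = 0 := by
  rw [phi_single_eq]
  rw [volume_pi, integral_fintype_prod_eq_prod (ι := Fin d)
    (f := fun k (x : ℝ) => exp (-(1/2) * x ^ 2) * (if k = i then x else 1))]
  refine Finset.prod_eq_zero (Finset.mem_univ i) ?_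
  have he : (fun x : ℝ => exp (-(1/2) * x ^ 2) * (if i = i then x else 1))
      = fun x : ℝ => x * exp (-(1/2) * x ^ 2) := by
    funext x
    rw [if_pos rfl]
    ring
  rw [he]
  exact val_g1

/-- assembled: linear form -/
lemma integrable_phi_linear (v : Fin d → ℝ) :
    Integrable (fun y : Fin d → ℝ => phi y * (v ⬝ᵥ y)) := by
  have he : (fun y : Fin d → ℝ => phi y * (v ⬝ᵥ y))
      = fun y => ∑ i, v i * (phi y * y i) := by
    funext y
    rw [dotProduct, Finset.mul_sum]
    exact Finset.sum_congr rfl fun i _ => by ring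
  rw [he]
  exact integrable_finset_sum _ fun i _ => (integrable_phi_single i).const_mul _

lemma val_phi_linear (v : Fin d → ℝ) : ∫ y : Fin d → ℝ, phi y * (v ⬝ᵥ y) = 0 := by
  have he : (fun y : Fin d → ℝ => phi y * (v ⬝ᵥ y))
      = fun y => ∑ i, v i * (phi y * y i) := by
    funext y
    rw [dotProduct, Finset.mul_sum]
    exact Finset.sum_congr rfl fun i _ => by ring
  rw [he, integral_finset_sum _ fun i _ => (integrable_phi_single i).const_mul _]
  simp [integral_const_mul, val_phi_single]

/-- assembled: quadratic form -/
lemma quad_expand (B : Matrix (Fin d) (Fin d) ℝ) :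
    (fun y : Fin d → ℝ => phi y * (y ⬝ᵥ B *ᵥ y))
      = fun y => ∑ i, ∑ j, B i j * (phi y * (y i * y j)) := by
  funext y
  simp only [dotProduct, Matrix.mulVec, Finset.mul_sum]
  refine Finset.sum_congr rfl fun i _ => Finset.sum_congr rfl fun j _ => by ring

lemma integrable_phi_quad (B : Matrix (Fin d) (Fin d) ℝ) :
    Integrable (fun y : Fin d → ℝ => phi y * (y ⬝ᵥ B *ᵥ y)) := by
  rw [quad_expand]
  exact integrable_finset_sum _ fun i _ =>
    integrable_finset_sum _ fun j _ => (integrable_phi_pair i j).const_mul _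

lemma val_phi_quad (B : Matrix (Fin d) (Fin d) ℝ) :
    ∫ y : Fin d → ℝ, phi y * (y ⬝ᵥ B *ᵥ y) = √(2 * π) ^ d * B.trace := by
  rw [quad_expand, integral_finset_sum _ fun i _ =>
    integrable_finset_sum _ fun j _ => (integrable_phi_pair i j).const_mul (B i j)]
  have : ∀ i : Fin d, ∫ y : Fin d → ℝ, (∑ j, B i j * (phi y * (y i * y j)))
      = B i i * √(2 * π) ^ d := by
    intro i
    rw [integral_finset_sum _ fun j _ => (integrable_phi_pair i j).const_mul (B i j)]
    have : ∀ j : Fin d, ∫ y : Fin d → ℝ, B i j * (phi y * (y i * y j))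
        = B i j * if i = j then √(2 * π) ^ d else 0 := fun j => by
      rw [integral_const_mul, val_phi_pair]
    rw [Finset.sum_congr rfl fun j _ => this j]
    simp [Finset.sum_ite_eq, mul_ite]
  rw [Finset.sum_congr rfl fun i _ => this i, Matrix.trace, ← Finset.sum_mul]
  simp [Matrix.diag, mul_comm]

lemma measurableEmbedding_mulVec {L : Matrix (Fin d) (Fin d) ℝ} (hL : L.det ≠ 0) :
    MeasurableEmbedding (fun y : Fin d → ℝ => L *ᵥ y) := by
  have hfun : (fun y : Fin d → ℝ => L *ᵥ y) = ⇑(Matrix.toLin' L) :=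
    funext fun y => (Matrix.toLin'_apply L y).symm
  let e : (Fin d → ℝ) ≃ₗ[ℝ] (Fin d → ℝ) :=
    LinearEquiv.ofLinear (Matrix.toLin' L) (Matrix.toLin' L⁻¹)
      (by rw [← Matrix.toLin'_mul, Matrix.mul_nonsing_inv _ (Ne.isUnit hL), Matrix.toLin'_one])
      (by rw [← Matrix.toLin'_mul, Matrix.nonsing_inv_mul _ (Ne.isUnit hL), Matrix.toLin'_one])
  let h : (Fin d → ℝ) ≃ₜ (Fin d → ℝ) :=
    { toEquiv := e.toEquiv
      continuous_toFun := LinearMap.continuous_on_pi (e : (Fin d → ℝ) →ₗ[ℝ] (Fin d → ℝ))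
      continuous_invFun := LinearMap.continuous_on_pi (e.symm : (Fin d → ℝ) →ₗ[ℝ] (Fin d → ℝ)) }
  have : (fun y : Fin d → ℝ => L *ᵥ y) = ⇑h := by
    funext y
    show L *ᵥ y = e y
    simp [e, LinearEquiv.ofLinear_apply, Matrix.toLin'_apply]
  rw [this]
  exact h.measurableEmbedding

lemma map_mulVec_volume {L : Matrix (Fin d) (Fin d) ℝ} (hL : L.det ≠ 0) :
    Measure.map (fun y : Fin d → ℝ => L *ᵥ y) volume
      = ENNReal.ofReal |L.det⁻¹| • volume := by
  have hfun : (fun y : Fin d → ℝ => L *ᵥ y) = ⇑(Matrix.toLin' L) :=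
    funext fun y => (Matrix.toLin'_apply L y).symm
  rw [hfun]
  exact Real.map_matrix_volume_pi_eq_smul_volume_pi hL

lemma integral_affine {L : Matrix (Fin d) (Fin d) ℝ} (hL : L.det ≠ 0) (c : Fin d → ℝ)
    (f : (Fin d → ℝ) → ℝ) :
    ∫ x, f x = |L.det| * ∫ y, f (c + L *ᵥ y) := by
  have hemb := measurableEmbedding_mulVec hL
  have h1 : ∫ y, f (c + L *ᵥ y)
      = ∫ x, f (c + x) ∂(Measure.map (fun y : Fin d → ℝ => L *ᵥ y) volume) :=
    (hemb.integral_map (fun x => f (c + x))).symm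
  rw [h1, map_mulVec_volume hL, integral_smul_measure,
    integral_add_left_eq_self (fun x => f x) c,
    ENNReal.toReal_ofReal (abs_nonneg _), smul_eq_mul, ← mul_assoc, abs_inv,
    mul_inv_cancel₀ (abs_ne_zero.mpr hL), one_mul]

lemma integrable_affine_iff {L : Matrix (Fin d) (Fin d) ℝ} (hL : L.det ≠ 0) (c : Fin d → ℝ)
    (f : (Fin d → ℝ) → ℝ) :
    Integrable (fun y : Fin d → ℝ => f (c + L *ᵥ y)) volume ↔ Integrable f volume := by
  have hemb := measurableEmbedding_mulVec hL
  have h0 : (fun y : Fin d → ℝ => f (c + L *ᵥ y))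
      = (fun x => f (c + x)) ∘ (fun y : Fin d → ℝ => L *ᵥ y) := rfl
  rw [h0, ← hemb.integrable_map_iff, map_mulVec_volume hL,
    integrable_smul_measure (ENNReal.ofReal_pos.mpr (abs_pos.mpr (inv_ne_zero hL))).ne'
      ENNReal.ofReal_ne_top]
  constructor
  · intro h
    have h2 := h.comp_add_left (-c)
    simpa using h2
  · intro h
    exact h.comp_add_left c


/-- the real-valued gaussian density on the pi type -/
noncomputable def pdfR (m : Fin d → ℝ) (S : Matrix (Fin d) (Fin d) ℝ) (x : Fin d → ℝ) : ℝ :=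
  (Real.sqrt ((2 * Real.pi) ^ d * S.det))⁻¹ *
    Real.exp (-(1 / 2) * dotProduct (x - m) (S⁻¹.mulVec (x - m)))

section posdef

variable {S : Matrix (Fin d) (Fin d) ℝ}

lemma sqrtS_mul_self (hS : S.PosDef) : hS.posSemidef.sqrt * hS.posSemidef.sqrt = S :=
  hS.posSemidef.sqrt_mul_self

lemma sqrt_det_sq (hS : S.PosDef) :
    hS.posSemidef.sqrt.det * hS.posSemidef.sqrt.det = S.det := by
  rw [← Matrix.det_mul, sqrtS_mul_self hS]

lemma sqrt_det_ne_zero (hS : S.PosDef) : hS.posSemidef.sqrt.det ≠ 0 := by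
  intro h
  have h2 := sqrt_det_sq hS
  rw [h, mul_zero] at h2
  exact hS.det_pos.ne' h2.symm

lemma sqrt_det_abs (hS : S.PosDef) : |hS.posSemidef.sqrt.det| = √S.det := by
  rw [← sqrt_det_sq hS, ← sq, Real.sqrt_sq_eq_abs]

lemma sqrt_transpose (hS : S.PosDef) : hS.posSemidef.sqrt.transpose = hS.posSemidef.sqrt := by
  have h := hS.posSemidef.posSemidef_sqrt.1
  rwa [Matrix.IsHermitian, Matrix.conjTranspose_eq_transpose_of_trivial] at h

lemma sqrt_inv_sqrt (hS : S.PosDef) : hS.posSemidef.sqrt * S⁻¹ * hS.posSemidef.sqrt = 1 := by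
  set L := hS.posSemidef.sqrt with hLdef
  have hdet : IsUnit L.det := Ne.isUnit (sqrt_det_ne_zero hS)
  have hSinv : S⁻¹ = L⁻¹ * L⁻¹ := by rw [← sqrtS_mul_self hS, Matrix.mul_inv_rev]
  rw [hSinv, ← Matrix.mul_assoc, Matrix.mul_nonsing_inv _ hdet, Matrix.one_mul,
    Matrix.nonsing_inv_mul _ hdet]

lemma mulVec_dot_mulVec (M N : Matrix (Fin d) (Fin d) ℝ) (x z : Fin d → ℝ) :
    (M *ᵥ x) ⬝ᵥ (N *ᵥ z) = x ⬝ᵥ ((Mᵀ * N) *ᵥ z) := by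
  rw [← Matrix.mulVec_mulVec, Matrix.dotProduct_mulVec x, Matrix.vecMul_transpose]

lemma sqrt_quad (hS : S.PosDef) (y : Fin d → ℝ) :
    (hS.posSemidef.sqrt *ᵥ y) ⬝ᵥ (S⁻¹ *ᵥ (hS.posSemidef.sqrt *ᵥ y)) = y ⬝ᵥ y := by
  rw [Matrix.mulVec_mulVec, mulVec_dot_mulVec, sqrt_transpose hS, ← Matrix.mul_assoc,
    sqrt_inv_sqrt hS, Matrix.one_mulVec]

lemma Zd_pos : (0:ℝ) < √(2 * π) ^ d :=
  pow_pos (Real.sqrt_pos.mpr (by positivity)) d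

lemma sqrt_two_pi_pow : √((2 * π) ^ d) = √(2 * π) ^ d := by
  induction d with
  | zero => simp
  | succ n ih => rw [pow_succ, pow_succ, Real.sqrt_mul (by positivity), ih]

lemma pdfR_const_pos (hS : S.PosDef) : (0:ℝ) < √((2 * π) ^ d * S.det) := by
  have h := hS.det_pos
  positivity

lemma pdfR_pos (hS : S.PosDef) (m : Fin d → ℝ) (x : Fin d → ℝ) : 0 < pdfR m S x := by
  have h := pdfR_const_pos (d := d) hS
  exact mul_pos (inv_pos.mpr h) (Real.exp_pos _)

/-- master change of variables -/
lemma key_integral (hS : S.PosDef) (m : Fin d → ℝ) (g : (Fin d → ℝ) → ℝ) :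
    ∫ x, pdfR m S x * g x
      = (√(2 * π) ^ d)⁻¹ * ∫ y, phi y * g (m + hS.posSemidef.sqrt *ᵥ y) := by
  set L := hS.posSemidef.sqrt with hLdef
  rw [integral_affine (sqrt_det_ne_zero hS) m (fun x => pdfR m S x * g x)]
  have hpt : ∀ y : Fin d → ℝ, pdfR m S (m + L *ᵥ y) * g (m + L *ᵥ y)
      = (√((2 * π) ^ d * S.det))⁻¹ * (phi y * g (m + L *ᵥ y)) := by
    intro y
    rw [pdfR, add_sub_cancel_left, sqrt_quad hS, phi_eq]
    ring
  rw [integral_congr_ae (Filter.Eventually.of_forall fun y => hpt y)]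
  rw [integral_const_mul, ← mul_assoc, sqrt_det_abs hS]
  congr 1
  rw [Real.sqrt_mul (by positivity), sqrt_two_pi_pow, mul_inv, ← mul_assoc,
    mul_comm (√S.det), mul_assoc, mul_inv_cancel₀ (Real.sqrt_ne_zero'.mpr hS.det_pos), mul_one]

lemma key_integrable (hS : S.PosDef) (m : Fin d → ℝ) (g : (Fin d → ℝ) → ℝ) :
    Integrable (fun x => pdfR m S x * g x) volume
      ↔ Integrable (fun y => phi y * g (m + hS.posSemidef.sqrt *ᵥ y)) volume := by
  set L := hS.posSemidef.sqrt with hLdef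
  rw [← integrable_affine_iff (sqrt_det_ne_zero hS) m (fun x => pdfR m S x * g x)]
  have hpt : (fun y : Fin d → ℝ => pdfR m S (m + L *ᵥ y) * g (m + L *ᵥ y))
      = fun y => (√((2 * π) ^ d * S.det))⁻¹ * (phi y * g (m + L *ᵥ y)) := by
    funext y
    rw [pdfR, add_sub_cancel_left, sqrt_quad hS, phi_eq]
    ring
  rw [hpt]
  exact integrable_const_mul_iff
    (IsUnit.mk0 _ (inv_ne_zero (pdfR_const_pos hS).ne')) _

lemma quad_affine_expand (L A : Matrix (Fin d) (Fin d) ℝ) (c : Fin d → ℝ) :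
    (fun y : Fin d → ℝ => phi y * ((c + L *ᵥ y) ⬝ᵥ (A *ᵥ (c + L *ᵥ y))))
      = fun y => phi y * (c ⬝ᵥ (A *ᵥ c)) + (phi y * ((c ᵥ* (A * L)) ⬝ᵥ y)
          + (phi y * (((A *ᵥ c) ᵥ* L) ⬝ᵥ y) + phi y * (y ⬝ᵥ ((Lᵀ * (A * L)) *ᵥ y)))) := by
  funext y
  rw [Matrix.mulVec_add, add_dotProduct, dotProduct_add, dotProduct_add]
  rw [show (c ⬝ᵥ A *ᵥ (L *ᵥ y)) = (c ᵥ* (A * L)) ⬝ᵥ y by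
    rw [Matrix.mulVec_mulVec, Matrix.dotProduct_mulVec]]
  rw [show ((L *ᵥ y) ⬝ᵥ A *ᵥ c) = ((A *ᵥ c) ᵥ* L) ⬝ᵥ y by
    rw [dotProduct_comm, Matrix.dotProduct_mulVec]]
  rw [show ((L *ᵥ y) ⬝ᵥ A *ᵥ (L *ᵥ y)) = y ⬝ᵥ ((Lᵀ * (A * L)) *ᵥ y) by
    rw [Matrix.mulVec_mulVec, mulVec_dot_mulVec]]
  ring

lemma main_quad_val (L A : Matrix (Fin d) (Fin d) ℝ) (c : Fin d → ℝ) :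
    ∫ y : Fin d → ℝ, phi y * ((c + L *ᵥ y) ⬝ᵥ (A *ᵥ (c + L *ᵥ y)))
      = √(2 * π) ^ d * ((c ⬝ᵥ (A *ᵥ c)) + (Lᵀ * (A * L)).trace) := by
  rw [quad_affine_expand]
  have h4 : Integrable (fun y : Fin d → ℝ =>
      phi y * (((A *ᵥ c) ᵥ* L) ⬝ᵥ y) + phi y * (y ⬝ᵥ ((Lᵀ * (A * L)) *ᵥ y))) volume :=
    (integrable_phi_linear _).add (integrable_phi_quad _)
  have h3 : Integrable (fun y : Fin d → ℝ =>
      phi y * ((c ᵥ* (A * L)) ⬝ᵥ y) + (phi y * (((A *ᵥ c) ᵥ* L) ⬝ᵥ y)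
        + phi y * (y ⬝ᵥ ((Lᵀ * (A * L)) *ᵥ y)))) volume :=
    (integrable_phi_linear _).add h4
  rw [integral_add (integrable_phi.mul_const _) h3,
    integral_add (integrable_phi_linear _) h4,
    integral_add (integrable_phi_linear _) (integrable_phi_quad _)]
  rw [integral_mul_const, val_phi, val_phi_linear, val_phi_linear, val_phi_quad]
  ring

lemma main_quad_integrable (L A : Matrix (Fin d) (Fin d) ℝ) (c : Fin d → ℝ) :
    Integrable (fun y : Fin d → ℝ => phi y * ((c + L *ᵥ y) ⬝ᵥ (A *ᵥ (c + L *ᵥ y)))) := by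
  rw [quad_affine_expand]
  exact (integrable_phi.mul_const _).add ((integrable_phi_linear _).add
    ((integrable_phi_linear _).add (integrable_phi_quad _)))

end posdef


/-! ### Transfer between EuclideanSpace and pi volume -/

lemma integral_E_eq (F : EuclideanSpace ℝ (Fin d) → ℝ) (G : (Fin d → ℝ) → ℝ)
    (hFG : ∀ y : Fin d → ℝ, F (((MeasurableEquiv.toLp 2 (Fin d → ℝ)).symm).symm y) = G y) :
    ∫ x, F x = ∫ y, G y := by
  have h := (EuclideanSpace.volume_preserving_symm_measurableEquiv_toLp (Fin d)).integral_comp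
    ((MeasurableEquiv.toLp 2 (Fin d → ℝ)).symm).measurableEmbedding
    (fun y : Fin d → ℝ => F (((MeasurableEquiv.toLp 2 (Fin d → ℝ)).symm).symm y))
  rw [integral_congr_ae (Filter.Eventually.of_forall fun y => hFG y)] at h
  rw [← h]
  exact integral_congr_ae (Filter.Eventually.of_forall fun x => by
    show F x = F (((MeasurableEquiv.toLp 2 (Fin d → ℝ)).symm).symm
      (((MeasurableEquiv.toLp 2 (Fin d → ℝ)).symm) x))
    rw [MeasurableEquiv.symm_apply_apply])

lemma integrable_E_iff (F : EuclideanSpace ℝ (Fin d) → ℝ) (G : (Fin d → ℝ) → ℝ)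
    (hFG : ∀ y : Fin d → ℝ, F (((MeasurableEquiv.toLp 2 (Fin d → ℝ)).symm).symm y) = G y) :
    Integrable F volume ↔ Integrable G volume := by
  have h := (EuclideanSpace.volume_preserving_symm_measurableEquiv_toLp (Fin d)).integrable_comp_emb
    ((MeasurableEquiv.toLp 2 (Fin d → ℝ)).symm).measurableEmbedding (g := G)
  rw [← h]
  refine integrable_congr (Filter.Eventually.of_forall fun x => ?_)
  have := hFG (((MeasurableEquiv.toLp 2 (Fin d → ℝ)).symm) x)
  rw [MeasurableEquiv.symm_apply_apply] at this
  exact this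

/-! ### measurability -/

lemma continuous_pdfR (m : Fin d → ℝ) (S : Matrix (Fin d) (Fin d) ℝ) :
    Continuous (pdfR m S) := by
  unfold pdfR
  refine continuous_const.mul (Real.continuous_exp.comp (continuous_const.mul ?_))
  unfold dotProduct Matrix.mulVec
  refine continuous_finset_sum _ fun i _ => ?_
  refine Continuous.mul ?_ ?_
  · exact (continuous_apply i).sub continuous_const
  · unfold dotProduct
    refine continuous_finset_sum _ fun j _ => ?_
    exact continuous_const.mul ((continuous_apply j).sub continuous_const)

lemma measurable_pdfR_E (m : Fin d → ℝ) (S : Matrix (Fin d) (Fin d) ℝ) :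
    Measurable (fun x : EuclideanSpace ℝ (Fin d) => pdfR m S x) :=
  ((continuous_pdfR m S).measurable).comp
    ((MeasurableEquiv.toLp 2 (Fin d → ℝ)).symm).measurable

lemma gaussianPdf_eq (m : EuclideanSpace ℝ (Fin d)) (S : Matrix (Fin d) (Fin d) ℝ) :
    gaussianPdf m S = fun x : EuclideanSpace ℝ (Fin d) => ENNReal.ofReal (pdfR m S x) := rfl

lemma measurable_gaussianPdf (m : EuclideanSpace ℝ (Fin d)) (S : Matrix (Fin d) (Fin d) ℝ) :
    Measurable (gaussianPdf m S) := by
  rw [gaussianPdf_eq]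
  exact ENNReal.measurable_ofReal.comp (measurable_pdfR_E m S)

/-! ### basic gaussian measure facts -/

lemma integrable_pdfR_pi {S : Matrix (Fin d) (Fin d) ℝ} (hS : S.PosDef) (m : Fin d → ℝ) :
    Integrable (fun x : Fin d → ℝ => pdfR m S x) volume := by
  have h := (key_integrable hS m (fun _ => 1)).mpr (by simpa [mul_one] using integrable_phi)
  simpa [mul_one] using h

lemma val_pdfR_pi {S : Matrix (Fin d) (Fin d) ℝ} (hS : S.PosDef) (m : Fin d → ℝ) :
    ∫ x : Fin d → ℝ, pdfR m S x = 1 := by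
  have h := key_integral hS m (fun _ => 1)
  simp only [mul_one] at h
  rw [h, val_phi, inv_mul_cancel₀ (Zd_pos (d := d)).ne']

lemma integrable_pdfR_E {S : Matrix (Fin d) (Fin d) ℝ} (hS : S.PosDef)
    (m : EuclideanSpace ℝ (Fin d)) :
    Integrable (fun x : EuclideanSpace ℝ (Fin d) => pdfR m S x) volume :=
  (integrable_E_iff _ (fun y : Fin d → ℝ => pdfR m S y) (fun _ => rfl)).mpr
    (integrable_pdfR_pi hS m)

lemma val_pdfR_E {S : Matrix (Fin d) (Fin d) ℝ} (hS : S.PosDef)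
    (m : EuclideanSpace ℝ (Fin d)) :
    ∫ x : EuclideanSpace ℝ (Fin d), pdfR m S x = 1 := by
  rw [integral_E_eq _ (fun y : Fin d → ℝ => pdfR m S y) (fun _ => rfl)]
  exact val_pdfR_pi hS m

lemma gaussianMeasure_univ {S : Matrix (Fin d) (Fin d) ℝ} (hS : S.PosDef)
    (m : EuclideanSpace ℝ (Fin d)) : gaussianMeasure m S Set.univ = 1 := by
  rw [gaussianMeasure, withDensity_apply _ MeasurableSet.univ, Measure.restrict_univ,
    gaussianPdf_eq]
  rw [← ofReal_integral_eq_lintegral_ofReal (integrable_pdfR_E hS m)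
    (Filter.Eventually.of_forall fun x => (pdfR_pos hS m x).le)]
  rw [val_pdfR_E hS m, ENNReal.ofReal_one]

lemma gaussianMeasure_prob {S : Matrix (Fin d) (Fin d) ℝ} (hS : S.PosDef)
    (m : EuclideanSpace ℝ (Fin d)) : IsProbabilityMeasure (gaussianMeasure m S) :=
  ⟨gaussianMeasure_univ hS m⟩

lemma gaussianMeasure_ac (m : EuclideanSpace ℝ (Fin d)) (S : Matrix (Fin d) (Fin d) ℝ) :
    gaussianMeasure m S ≪ volume :=
  withDensity_absolutelyContinuous _ _

lemma volume_ac_gaussianMeasure {S : Matrix (Fin d) (Fin d) ℝ} (hS : S.PosDef)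
    (m : EuclideanSpace ℝ (Fin d)) :
    (volume : Measure (EuclideanSpace ℝ (Fin d))) ≪ gaussianMeasure m S :=
  withDensity_absolutelyContinuous' (measurable_gaussianPdf m S).aemeasurable
    (Filter.Eventually.of_forall fun x => (ENNReal.ofReal_pos.mpr (pdfR_pos hS m x)).ne')

/-! ### integrals against the gaussian measure -/

lemma integral_gaussianMeasure {S : Matrix (Fin d) (Fin d) ℝ} (hS : S.PosDef)
    (m : EuclideanSpace ℝ (Fin d)) (F : EuclideanSpace ℝ (Fin d) → ℝ) :
    ∫ x, F x ∂(gaussianMeasure m S) = ∫ x : EuclideanSpace ℝ (Fin d), pdfR m S x * F x := by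
  rw [gaussianMeasure]
  have hid : gaussianPdf m S
      = fun x : EuclideanSpace ℝ (Fin d) => ((pdfR m S x).toNNReal : ℝ≥0∞) := rfl
  rw [hid]
  rw [integral_withDensity_eq_integral_smul
    (show Measurable fun x : EuclideanSpace ℝ (Fin d) => (pdfR m S x).toNNReal from
      measurable_real_toNNReal.comp (measurable_pdfR_E m S)) F]
  refine integral_congr_ae (Filter.Eventually.of_forall fun x => ?_)
  show (pdfR m S x).toNNReal • F x = pdfR m S x * F x
  rw [NNReal.smul_def, smul_eq_mul, Real.coe_toNNReal _ (pdfR_pos hS m x).le]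

lemma integrable_gaussianMeasure_iff {S : Matrix (Fin d) (Fin d) ℝ} (hS : S.PosDef)
    (m : EuclideanSpace ℝ (Fin d)) (F : EuclideanSpace ℝ (Fin d) → ℝ) :
    Integrable F (gaussianMeasure m S)
      ↔ Integrable (fun x : EuclideanSpace ℝ (Fin d) => pdfR m S x * F x) volume := by
  rw [gaussianMeasure, integrable_withDensity_iff (measurable_gaussianPdf m S)
    (Filter.Eventually.of_forall fun x => ENNReal.ofReal_lt_top)]
  refine integrable_congr (Filter.Eventually.of_forall fun x => ?_)
  show F x * (gaussianPdf m S x).toReal = pdfR m S x * F x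
  rw [gaussianPdf_eq]
  show F x * (ENNReal.ofReal (pdfR m S x)).toReal = pdfR m S x * F x
  rw [ENNReal.toReal_ofReal (pdfR_pos hS m x).le]
  exact mul_comm _ _

/-! ### quadratic form integrals -/

lemma gauss_quad_val {P : Matrix (Fin d) (Fin d) ℝ} (hP : P.PosDef)
    (m mc : EuclideanSpace ℝ (Fin d)) (A : Matrix (Fin d) (Fin d) ℝ) :
    ∫ x, ((x - mc) ⬝ᵥ (A *ᵥ (x - mc))) ∂(gaussianMeasure m P)
      = ((m - mc) ⬝ᵥ (A *ᵥ (m - mc)))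
        + ((hP.posSemidef.sqrt)ᵀ * (A * hP.posSemidef.sqrt)).trace := by
  set mp : Fin d → ℝ := WithLp.equiv 2 (Fin d → ℝ) m with hmp
  set mcp : Fin d → ℝ := WithLp.equiv 2 (Fin d → ℝ) mc with hmcp
  rw [integral_gaussianMeasure hP m _]
  rw [integral_E_eq _
    (fun y : Fin d → ℝ => pdfR mp P y * ((y - mcp) ⬝ᵥ (A *ᵥ (y - mcp)))) (fun _ => rfl)]
  rw [key_integral hP mp (fun z => (z - mcp) ⬝ᵥ (A *ᵥ (z - mcp)))]
  rw [show (fun y : Fin d → ℝ =>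
      phi y * ((mp + hP.posSemidef.sqrt *ᵥ y - mcp) ⬝ᵥ (A *ᵥ (mp + hP.posSemidef.sqrt *ᵥ y - mcp))))
      = fun y : Fin d → ℝ => phi y * (((mp - mcp) + hP.posSemidef.sqrt *ᵥ y)
          ⬝ᵥ (A *ᵥ ((mp - mcp) + hP.posSemidef.sqrt *ᵥ y))) from funext fun y => by
    rw [add_sub_right_comm]]
  rw [main_quad_val (hP.posSemidef.sqrt) A (mp - mcp), ← mul_assoc,
    inv_mul_cancel₀ (Zd_pos (d := d)).ne', one_mul]
  rfl

lemma gauss_quad_integrable {P : Matrix (Fin d) (Fin d) ℝ} (hP : P.PosDef)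
    (m mc : EuclideanSpace ℝ (Fin d)) (A : Matrix (Fin d) (Fin d) ℝ) :
    Integrable (fun x : EuclideanSpace ℝ (Fin d) => (x - mc) ⬝ᵥ (A *ᵥ (x - mc)))
      (gaussianMeasure m P) := by
  set mp : Fin d → ℝ := WithLp.equiv 2 (Fin d → ℝ) m with hmp
  set mcp : Fin d → ℝ := WithLp.equiv 2 (Fin d → ℝ) mc with hmcp
  rw [integrable_gaussianMeasure_iff hP m _]
  rw [integrable_E_iff _
    (fun y : Fin d → ℝ => pdfR mp P y * ((y - mcp) ⬝ᵥ (A *ᵥ (y - mcp)))) (fun _ => rfl)]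
  rw [key_integrable hP mp (fun z => (z - mcp) ⬝ᵥ (A *ᵥ (z - mcp)))]
  rw [show (fun y : Fin d → ℝ =>
      phi y * ((mp + hP.posSemidef.sqrt *ᵥ y - mcp) ⬝ᵥ (A *ᵥ (mp + hP.posSemidef.sqrt *ᵥ y - mcp))))
      = fun y : Fin d → ℝ => phi y * (((mp - mcp) + hP.posSemidef.sqrt *ᵥ y)
          ⬝ᵥ (A *ᵥ ((mp - mcp) + hP.posSemidef.sqrt *ᵥ y))) from funext fun y => by
    rw [add_sub_right_comm]]
  exact main_quad_integrable _ _ _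


lemma gaussianPdf_eq' (m : EuclideanSpace ℝ (Fin d)) (S : Matrix (Fin d) (Fin d) ℝ) :
    gaussianPdf m S = fun x : EuclideanSpace ℝ (Fin d) => ENNReal.ofReal (pdfR m S x) := rfl

lemma gaussianMeasure_prob' {S : Matrix (Fin d) (Fin d) ℝ} (hS : S.PosDef)
    (m : EuclideanSpace ℝ (Fin d)) : IsProbabilityMeasure (gaussianMeasure m S) :=
  ⟨gaussianMeasure_univ hS m⟩

lemma gaussian_rnDeriv {P₁ P₂ : Matrix (Fin d) (Fin d) ℝ} (hP₁ : P₁.PosDef) (hP₂ : P₂.PosDef)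
    (m₁ m₂ : EuclideanSpace ℝ (Fin d)) :
    (gaussianMeasure m₁ P₁).rnDeriv (gaussianMeasure m₂ P₂)
      =ᵐ[gaussianMeasure m₂ P₂]
        fun x => ENNReal.ofReal (pdfR m₁ P₁ x / pdfR m₂ P₂ x) := by
  haveI : IsProbabilityMeasure (gaussianMeasure m₂ P₂) := gaussianMeasure_prob' hP₂ m₂
  have hh : Measurable (fun x : EuclideanSpace ℝ (Fin d) =>
      ENNReal.ofReal (pdfR m₁ P₁ x / pdfR m₂ P₂ x)) :=
    ENNReal.measurable_ofReal.comp ((measurable_pdfR_E m₁ P₁).div (measurable_pdfR_E m₂ P₂))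
  have hwd : (gaussianMeasure m₂ P₂).withDensity
      (fun x => ENNReal.ofReal (pdfR m₁ P₁ x / pdfR m₂ P₂ x)) = gaussianMeasure m₁ P₁ := by
    rw [gaussianMeasure, gaussianMeasure,
      ← withDensity_mul _ (measurable_gaussianPdf m₂ P₂) hh]
    congr 1
    funext x
    show gaussianPdf m₂ P₂ x * ENNReal.ofReal (pdfR m₁ P₁ x / pdfR m₂ P₂ x)
        = gaussianPdf m₁ P₁ x
    rw [gaussianPdf_eq' m₂ P₂, gaussianPdf_eq' m₁ P₁]
    show ENNReal.ofReal (pdfR m₂ P₂ x) * ENNReal.ofReal (pdfR m₁ P₁ x / pdfR m₂ P₂ x)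
        = ENNReal.ofReal (pdfR m₁ P₁ x)
    rw [← ENNReal.ofReal_mul (pdfR_pos hP₂ m₂ x).le]
    congr 1
    rw [mul_comm, div_mul_cancel₀ _ (pdfR_pos hP₂ m₂ x).ne']
  conv_lhs => rw [← hwd]
  exact Measure.rnDeriv_withDensity _ hh

lemma log_pdfR {S : Matrix (Fin d) (Fin d) ℝ} (hS : S.PosDef) (m x : Fin d → ℝ) :
    Real.log (pdfR m S x)
      = -Real.log (√((2 * π) ^ d * S.det))
        + (-(1/2) * ((x - m) ⬝ᵥ (S⁻¹ *ᵥ (x - m)))) := by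
  rw [pdfR, Real.log_mul (inv_ne_zero (pdfR_const_pos hS).ne') (Real.exp_ne_zero _),
    Real.log_inv, Real.log_exp]

lemma dot_flip (A : Matrix (Fin d) (Fin d) ℝ) (u v : Fin d → ℝ) :
    (u - v) ⬝ᵥ (A *ᵥ (u - v)) = (v - u) ⬝ᵥ (A *ᵥ (v - u)) := by
  rw [show u - v = -(v - u) from (neg_sub v u).symm, Matrix.mulVec_neg,
    neg_dotProduct, dotProduct_neg, neg_neg]


end GaussKL

open GaussKL Real Matrix

/-- Closed-form KL divergence between multivariate Gaussians (Appendix C):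
`D(N(m₁,P₁) ‖ N(m₂,P₂)) = ½ (tr(P₂⁻¹P₁) − log(det P₁ / det P₂) − d + (m₂−m₁)ᵀP₂⁻¹(m₂−m₁))`. -/
theorem klDiv_gaussian_gaussian {d : ℕ} (hd : 0 < d)
    (m₁ m₂ : EuclideanSpace ℝ (Fin d)) (P₁ P₂ : Matrix (Fin d) (Fin d) ℝ)
    (hP₁ : P₁.PosDef) (hP₂ : P₂.PosDef) :
    klDiv (gaussianMeasure m₁ P₁) (gaussianMeasure m₂ P₂)
      = ENNReal.ofReal ((1 / 2) * ((P₂⁻¹ * P₁).trace - Real.log (P₁.det / P₂.det) - d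
          + dotProduct (WithLp.ofLp (m₂ - m₁)) (P₂⁻¹.mulVec (WithLp.ofLp (m₂ - m₁))))) := by
  classical
  set μ := gaussianMeasure m₁ P₁ with hμdef
  set ν := gaussianMeasure m₂ P₂ with hνdef
  haveI hμp : IsProbabilityMeasure μ := gaussianMeasure_prob' hP₁ m₁
  haveI hνp : IsProbabilityMeasure ν := gaussianMeasure_prob' hP₂ m₂
  have hac : μ ≪ ν := (gaussianMeasure_ac m₁ P₁).trans (volume_ac_gaussianMeasure hP₂ m₂)
  -- the log-likelihood ratio
  set κ : ℝ := Real.log (√((2 * π) ^ d * P₂.det)) - Real.log (√((2 * π) ^ d * P₁.det))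
    with hκdef
  set G : EuclideanSpace ℝ (Fin d) → ℝ := fun x =>
    κ + ((1/2) * ((x - m₂) ⬝ᵥ (P₂⁻¹ *ᵥ (x - m₂))) - (1/2) * ((x - m₁) ⬝ᵥ (P₁⁻¹ *ᵥ (x - m₁))))
    with hGdef
  have hrd : (μ.rnDeriv ν) =ᵐ[μ] fun x => ENNReal.ofReal (pdfR m₁ P₁ x / pdfR m₂ P₂ x) :=
    hac.ae_eq (gaussian_rnDeriv hP₁ hP₂ m₁ m₂)
  have hllr_ae : llr μ ν =ᵐ[μ] G := by
    filter_upwards [hrd] with x hx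
    show Real.log ((μ.rnDeriv ν x).toReal) = G x
    rw [hx, ENNReal.toReal_ofReal (div_nonneg (pdfR_pos hP₁ m₁ x).le (pdfR_pos hP₂ m₂ x).le),
      Real.log_div (pdfR_pos hP₁ m₁ x).ne' (pdfR_pos hP₂ m₂ x).ne',
      log_pdfR hP₁ m₁ x, log_pdfR hP₂ m₂ x, hGdef, hκdef]
    simp only [WithLp.ofLp_sub]
    ring
  -- integrability
  have h1 : Integrable (fun x : EuclideanSpace ℝ (Fin d) =>
      (x - m₁) ⬝ᵥ (P₁⁻¹ *ᵥ (x - m₁))) μ := gauss_quad_integrable hP₁ m₁ m₁ P₁⁻¹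
  have h2 : Integrable (fun x : EuclideanSpace ℝ (Fin d) =>
      (x - m₂) ⬝ᵥ (P₂⁻¹ *ᵥ (x - m₂))) μ := gauss_quad_integrable hP₁ m₁ m₂ P₂⁻¹
  have h1c : Integrable (fun x : EuclideanSpace ℝ (Fin d) =>
      (1/2) * ((x - m₁) ⬝ᵥ (P₁⁻¹ *ᵥ (x - m₁)))) μ := h1.const_mul _
  have h2c : Integrable (fun x : EuclideanSpace ℝ (Fin d) =>
      (1/2) * ((x - m₂) ⬝ᵥ (P₂⁻¹ *ᵥ (x - m₂)))) μ := h2.const_mul _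
  have hsub : Integrable (fun x : EuclideanSpace ℝ (Fin d) =>
      (1/2) * ((x - m₂) ⬝ᵥ (P₂⁻¹ *ᵥ (x - m₂)))
        - (1/2) * ((x - m₁) ⬝ᵥ (P₁⁻¹ *ᵥ (x - m₁)))) μ := h2c.sub h1c
  have hGint : Integrable G μ := (integrable_const κ).add hsub
  have hllr_int : Integrable (llr μ ν) μ := hGint.congr hllr_ae.symm
  -- the integral
  have hI1 : ∫ x, ((x - m₁) ⬝ᵥ (P₁⁻¹ *ᵥ (x - m₁))) ∂μ = (d : ℝ) := by
    rw [hμdef, gauss_quad_val hP₁ m₁ m₁ P₁⁻¹]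
    rw [sub_self, sub_self, WithLp.ofLp_zero, Matrix.mulVec_zero, dotProduct_zero, zero_add]
    rw [sqrt_transpose hP₁, ← Matrix.mul_assoc, sqrt_inv_sqrt hP₁, Matrix.trace_one]
    simp
  have hI2 : ∫ x, ((x - m₂) ⬝ᵥ (P₂⁻¹ *ᵥ (x - m₂))) ∂μ
      = ((m₂ - m₁) ⬝ᵥ (P₂⁻¹ *ᵥ (m₂ - m₁))) + (P₂⁻¹ * P₁).trace := by
    rw [hμdef, gauss_quad_val hP₁ m₁ m₂ P₂⁻¹]
    rw [sqrt_transpose hP₁, Matrix.trace_mul_comm, Matrix.mul_assoc, sqrtS_mul_self hP₁]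
    simp only [WithLp.ofLp_sub]
    rw [dot_flip P₂⁻¹ m₁ m₂]
  have hκval : κ = -(1/2) * Real.log (P₁.det / P₂.det) := by
    rw [hκdef, Real.log_sqrt (by have := hP₂.det_pos; positivity),
      Real.log_sqrt (by have := hP₁.det_pos; positivity),
      Real.log_mul (by positivity) hP₂.det_pos.ne',
      Real.log_mul (by positivity) hP₁.det_pos.ne',
      Real.log_div hP₁.det_pos.ne' hP₂.det_pos.ne']
    ring
  have hint : ∫ x, llr μ ν x ∂μ
      = κ + ((1/2) * (((m₂ - m₁) ⬝ᵥ (P₂⁻¹ *ᵥ (m₂ - m₁))) + (P₂⁻¹ * P₁).trace)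
          - (1/2) * (d : ℝ)) := by
    rw [integral_congr_ae hllr_ae, hGdef]
    rw [integral_add (integrable_const κ) hsub, integral_sub h2c h1c,
      integral_const_mul, integral_const_mul, hI1, hI2]
    simp [measure_univ]
  rw [klDiv, if_pos ⟨hac, hllr_int⟩, hint, hκval]
  congr 1
  simp only [WithLp.ofLp_sub]
  ring
end
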